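/- arXiv:1506.07833 — 4 statements merged into one kernel-verified Lean document; each statement's English description precedes it below -/
import Mathlib

section
/- For complex ζ and q with |q| < 1 and |q| < |ζ²| < 1, the identity ∑_{ℓ,m≥0} ζ^ℓ ζ'^m q^{ℓm} - ∑_{ℓ,m<0} ζ^ℓ ζ'^m q^{ℓm} = ∑_{ℓ,m≥1}(ζ^ℓ ζ'^m - ζ^{-ℓ}ζ'^{-m}) q^{ℓm} - (ζζ' - 1)/((ζ-1)(ζ'-1)) holds, whenever ζ ≠ 1 and ζ' ≠ 1 and both |q| < |ζ| < 1 and |q| < |ζ'| < 1. -/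
open Complex

set_option maxHeartbeats 800000 in
theorem stmt6 (q ζ ζ' : ℂ) (hq0 : 0 < ‖q‖) (hq : ‖q‖ < 1)
    (h1 : ‖q‖ < ‖ζ‖) (h2 : ‖ζ‖ < 1) (h1' : ‖q‖ < ‖ζ'‖) (h2' : ‖ζ'‖ < 1)
    (hζ : ζ ≠ 1) (hζ' : ζ' ≠ 1) :
    (∑' p : ℕ × ℕ, ζ ^ p.1 * ζ' ^ p.2 * q ^ (p.1 * p.2))
      - ∑' p : ℕ × ℕ, ζ ^ (-(p.1 + 1) : ℤ) * ζ' ^ (-(p.2 + 1) : ℤ) * q ^ ((p.1 + 1) * (p.2 + 1))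
      = (∑' p : ℕ × ℕ,
          (ζ ^ (p.1 + 1) * ζ' ^ (p.2 + 1) - ζ ^ (-(p.1 + 1) : ℤ) * ζ' ^ (-(p.2 + 1) : ℤ))
            * q ^ ((p.1 + 1) * (p.2 + 1)))
        - (ζ * ζ' - 1) / ((ζ - 1) * (ζ' - 1)) := by
  have hζ0 : ζ ≠ 0 := by
    intro h; rw [h, norm_zero] at h1; linarith
  have hζ'0 : ζ' ≠ 0 := by
    intro h; rw [h, norm_zero] at h1'; linarith
  have hζn : (0:ℝ) < ‖ζ‖ := lt_trans hq0 h1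
  have hζ'n : (0:ℝ) < ‖ζ'‖ := lt_trans hq0 h1'
  -- norms of q powers
  have hqpow : ∀ n : ℕ, ‖q‖ ^ n ≤ 1 := fun n => pow_le_one₀ (norm_nonneg _) hq.le
  have hzq : ∀ n : ℕ, ‖ζ' * q ^ n‖ < 1 := by
    intro n
    rw [norm_mul, norm_pow]
    calc ‖ζ'‖ * ‖q‖ ^ n ≤ ‖ζ'‖ * 1 :=
          mul_le_mul_of_nonneg_left (hqpow n) (norm_nonneg _)
      _ = ‖ζ'‖ := mul_one _
      _ < 1 := h2'
  have hden : ∀ n : ℕ, (1 : ℂ) - ζ' * q ^ n ≠ 0 := by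
    intro n h
    have := hzq n
    rw [sub_eq_zero] at h
    rw [← h, norm_one] at this
    exact lt_irrefl _ this
  -- abbreviations
  set a : ℕ × ℕ → ℂ := fun p => ζ ^ p.1 * ζ' ^ p.2 * q ^ (p.1 * p.2) with ha_def
  set b : ℕ × ℕ → ℂ := fun p =>
    ζ ^ (-(p.1 + 1) : ℤ) * ζ' ^ (-(p.2 + 1) : ℤ) * q ^ ((p.1 + 1) * (p.2 + 1)) with hb_def
  set c : ℕ × ℕ → ℂ := fun p =>
    ζ ^ (p.1 + 1) * ζ' ^ (p.2 + 1) * q ^ ((p.1 + 1) * (p.2 + 1)) with hc_def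
  -- rewriting b as inverses
  have hb_eq : ∀ p : ℕ × ℕ,
      b p = (ζ ^ (p.1 + 1))⁻¹ * (ζ' ^ (p.2 + 1))⁻¹ * q ^ ((p.1 + 1) * (p.2 + 1)) := by
    intro p
    have e1 : ζ ^ (-(p.1 + 1) : ℤ) = (ζ ^ (p.1 + 1))⁻¹ := by
      rw [zpow_neg]
      norm_cast
    have e2 : ζ' ^ (-(p.2 + 1) : ℤ) = (ζ' ^ (p.2 + 1))⁻¹ := by
      rw [zpow_neg]
      norm_cast
    rw [hb_def]
    simp only [e1, e2]
  -- summability of a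
  have hgeomζ : Summable fun n : ℕ => ‖ζ‖ ^ n := summable_geometric_of_lt_one (norm_nonneg _) h2
  have hgeomζ' : Summable fun n : ℕ => ‖ζ'‖ ^ n := summable_geometric_of_lt_one (norm_nonneg _) h2'
  have hprod : Summable fun p : ℕ × ℕ => ‖ζ‖ ^ p.1 * ‖ζ'‖ ^ p.2 :=
    hgeomζ.mul_of_nonneg hgeomζ' (fun n => pow_nonneg (norm_nonneg _) n)
      (fun n => pow_nonneg (norm_nonneg _) n)
  have ha : Summable a := by
    apply Summable.of_norm_bounded hprod
    intro p
    rw [ha_def]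
    simp only [norm_mul, norm_pow]
    calc ‖ζ‖ ^ p.1 * ‖ζ'‖ ^ p.2 * ‖q‖ ^ (p.1 * p.2)
        ≤ ‖ζ‖ ^ p.1 * ‖ζ'‖ ^ p.2 * 1 := by
          apply mul_le_mul_of_nonneg_left (hqpow _)
          positivity
      _ = ‖ζ‖ ^ p.1 * ‖ζ'‖ ^ p.2 := mul_one _
  -- summability of c
  have hc : Summable c := by
    apply Summable.of_norm_bounded hprod
    intro p
    rw [hc_def]
    simp only [norm_mul, norm_pow]
    have e1 : ‖ζ‖ ^ (p.1 + 1) ≤ ‖ζ‖ ^ p.1 :=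
      pow_le_pow_of_le_one (norm_nonneg _) h2.le (by omega)
    have e2 : ‖ζ'‖ ^ (p.2 + 1) ≤ ‖ζ'‖ ^ p.2 :=
      pow_le_pow_of_le_one (norm_nonneg _) h2'.le (by omega)
    calc ‖ζ‖ ^ (p.1 + 1) * ‖ζ'‖ ^ (p.2 + 1) * ‖q‖ ^ ((p.1 + 1) * (p.2 + 1))
        ≤ ‖ζ‖ ^ p.1 * ‖ζ'‖ ^ p.2 * 1 := by
          apply mul_le_mul _ (hqpow _) (by positivity) (by positivity)
          exact mul_le_mul e1 e2 (by positivity) (by positivity)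
      _ = ‖ζ‖ ^ p.1 * ‖ζ'‖ ^ p.2 := mul_one _
  -- summability of b
  have hr : (0:ℝ) ≤ ‖q‖ / ‖ζ‖ := by positivity
  have hr1 : ‖q‖ / ‖ζ‖ < 1 := (div_lt_one hζn).mpr h1
  have hs : (0:ℝ) ≤ ‖q‖ / ‖ζ'‖ := by positivity
  have hs1 : ‖q‖ / ‖ζ'‖ < 1 := (div_lt_one hζ'n).mpr h1'
  have hb : Summable b := by
    apply Summable.of_norm_bounded
      (g := fun p : ℕ × ℕ => (‖q‖ / ‖ζ‖) ^ p.1 * ((‖q‖ / ‖ζ'‖) ^ p.2 * (‖q‖ / (‖ζ‖ * ‖ζ'‖))))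
    · exact (summable_geometric_of_lt_one hr hr1).mul_of_nonneg
        ((summable_geometric_of_lt_one hs hs1).mul_right _)
        (fun n => by positivity) (fun n => by positivity)
    · intro p
      rw [hb_eq p]
      simp only [norm_mul, norm_pow, norm_inv]
      have key : (‖q‖ / ‖ζ‖) ^ p.1 * ((‖q‖ / ‖ζ'‖) ^ p.2 * (‖q‖ / (‖ζ‖ * ‖ζ'‖)))
          = ‖q‖ ^ (p.1 + p.2 + 1) / (‖ζ‖ ^ (p.1 + 1) * ‖ζ'‖ ^ (p.2 + 1)) := by
        rw [div_pow, div_pow, div_mul_div_comm, div_mul_div_comm]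
        congr 1 <;> ring
      rw [key]
      have hle : ‖q‖ ^ ((p.1 + 1) * (p.2 + 1)) ≤ ‖q‖ ^ (p.1 + p.2 + 1) :=
        pow_le_pow_of_le_one (norm_nonneg _) hq.le (by nlinarith)
      calc (‖ζ‖ ^ (p.1 + 1))⁻¹ * (‖ζ'‖ ^ (p.2 + 1))⁻¹ * ‖q‖ ^ ((p.1 + 1) * (p.2 + 1))
          = ‖q‖ ^ ((p.1 + 1) * (p.2 + 1)) / (‖ζ‖ ^ (p.1 + 1) * ‖ζ'‖ ^ (p.2 + 1)) := by
            rw [div_eq_mul_inv, mul_inv]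
            ring
        _ ≤ ‖q‖ ^ (p.1 + p.2 + 1) / (‖ζ‖ ^ (p.1 + 1) * ‖ζ'‖ ^ (p.2 + 1)) := by
            gcongr
  -- inverse-norm bound
  have hinvb : ∀ n : ℕ, ‖(1 - ζ' * q ^ n)⁻¹‖ ≤ (1 - ‖ζ'‖)⁻¹ := by
    intro n
    rw [norm_inv]
    have hpos : (0:ℝ) < 1 - ‖ζ'‖ := by linarith
    apply inv_anti₀ hpos
    have hb1 : ‖ζ' * q ^ n‖ ≤ ‖ζ'‖ := by
      rw [norm_mul, norm_pow]
      calc ‖ζ'‖ * ‖q‖ ^ n ≤ ‖ζ'‖ * 1 := mul_le_mul_of_nonneg_left (hqpow n) (norm_nonneg _)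
        _ = ‖ζ'‖ := mul_one _
    have hb2 : ‖(1:ℂ)‖ - ‖ζ' * q ^ n‖ ≤ ‖1 - ζ' * q ^ n‖ := norm_sub_norm_le _ _
    rw [norm_one] at hb2
    linarith
  -- fiberwise sums for a
  have hfa_eq : ∀ ℓ : ℕ, (fun m : ℕ => a (ℓ, m)) = fun m : ℕ => ζ ^ ℓ * (ζ' * q ^ ℓ) ^ m := by
    intro ℓ
    funext m
    rw [ha_def]
    simp only
    rw [mul_pow, ← pow_mul]
    ring
  have hfiba : ∀ ℓ : ℕ, Summable fun m : ℕ => a (ℓ, m) := by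
    intro ℓ
    rw [hfa_eq ℓ]
    exact (summable_geometric_of_norm_lt_one (hzq ℓ)).mul_left _
  have hinnera : ∀ ℓ : ℕ, ∑' m : ℕ, a (ℓ, m) = ζ ^ ℓ * (1 - ζ' * q ^ ℓ)⁻¹ := by
    intro ℓ
    rw [hfa_eq ℓ, tsum_mul_left, tsum_geometric_of_norm_lt_one (hzq ℓ)]
  -- fiberwise sums for c
  have hfc_eq : ∀ ℓ : ℕ, (fun m : ℕ => c (ℓ, m))
      = fun m : ℕ => ζ ^ (ℓ + 1) * (ζ' * q ^ (ℓ + 1)) * (ζ' * q ^ (ℓ + 1)) ^ m := by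
    intro ℓ
    funext m
    rw [hc_def]
    simp only
    ring
  have hfibc : ∀ ℓ : ℕ, Summable fun m : ℕ => c (ℓ, m) := by
    intro ℓ
    rw [hfc_eq ℓ]
    exact (summable_geometric_of_norm_lt_one (hzq (ℓ + 1))).mul_left _
  have hinnerc : ∀ ℓ : ℕ, ∑' m : ℕ, c (ℓ, m)
      = ζ ^ (ℓ + 1) * (ζ' * q ^ (ℓ + 1)) * (1 - ζ' * q ^ (ℓ + 1))⁻¹ := by
    intro ℓ
    rw [hfc_eq ℓ, tsum_mul_left, tsum_geometric_of_norm_lt_one (hzq (ℓ + 1))]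
  -- summability of the row-sum functions
  have hg : Summable fun ℓ : ℕ => ζ ^ ℓ * (1 - ζ' * q ^ ℓ)⁻¹ := by
    apply Summable.of_norm_bounded (g := fun ℓ : ℕ => ‖ζ‖ ^ ℓ * (1 - ‖ζ'‖)⁻¹) (hgeomζ.mul_right _)
    intro ℓ
    rw [norm_mul, norm_pow]
    exact mul_le_mul_of_nonneg_left (hinvb ℓ) (by positivity)
  have hh : Summable fun ℓ : ℕ =>
      ζ ^ (ℓ + 1) * (ζ' * q ^ (ℓ + 1)) * (1 - ζ' * q ^ (ℓ + 1))⁻¹ := by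
    apply Summable.of_norm_bounded (g := fun ℓ : ℕ => ‖ζ‖ ^ ℓ * (1 - ‖ζ'‖)⁻¹) (hgeomζ.mul_right _)
    intro ℓ
    rw [norm_mul, norm_mul, norm_pow]
    have n1 : ‖ζ‖ ^ (ℓ + 1) ≤ ‖ζ‖ ^ ℓ :=
      pow_le_pow_of_le_one (norm_nonneg _) h2.le (by omega)
    have n2 : ‖ζ' * q ^ (ℓ + 1)‖ ≤ 1 := by
      rw [norm_mul, norm_pow]
      calc ‖ζ'‖ * ‖q‖ ^ (ℓ + 1) ≤ 1 * 1 :=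
            mul_le_mul h2'.le (hqpow _) (by positivity) zero_le_one
        _ = 1 := mul_one _
    calc ‖ζ‖ ^ (ℓ + 1) * ‖ζ' * q ^ (ℓ + 1)‖ * ‖(1 - ζ' * q ^ (ℓ + 1))⁻¹‖
        ≤ ‖ζ‖ ^ ℓ * 1 * (1 - ‖ζ'‖)⁻¹ := by
          apply mul_le_mul _ (hinvb _) (norm_nonneg _) (by positivity)
          exact mul_le_mul n1 n2 (norm_nonneg _) (by positivity)
      _ = ‖ζ‖ ^ ℓ * (1 - ‖ζ'‖)⁻¹ := by ring
  -- row splitting identity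
  have hsplit : ∀ ℓ : ℕ, ζ ^ (ℓ + 1) * (1 - ζ' * q ^ (ℓ + 1))⁻¹
      = ζ ^ (ℓ + 1) + ζ ^ (ℓ + 1) * (ζ' * q ^ (ℓ + 1)) * (1 - ζ' * q ^ (ℓ + 1))⁻¹ := by
    intro ℓ
    have hd := hden (ℓ + 1)
    field_simp
    ring
  -- geometric shifted sums
  have hshift_eq : (fun ℓ : ℕ => ζ ^ (ℓ + 1)) = fun ℓ : ℕ => ζ * ζ ^ ℓ := by
    funext ℓ; rw [pow_succ']
  have hs1 : Summable fun ℓ : ℕ => ζ ^ (ℓ + 1) := by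
    rw [hshift_eq]
    exact (summable_geometric_of_norm_lt_one h2).mul_left _
  have hshiftsum : ∑' ℓ : ℕ, ζ ^ (ℓ + 1) = ζ * (1 - ζ)⁻¹ := by
    rw [hshift_eq, tsum_mul_left, tsum_geometric_of_norm_lt_one h2]
  -- value of C
  have hCval : ∑' p : ℕ × ℕ, c p
      = ∑' ℓ : ℕ, ζ ^ (ℓ + 1) * (ζ' * q ^ (ℓ + 1)) * (1 - ζ' * q ^ (ℓ + 1))⁻¹ := by
    rw [Summable.tsum_prod' hc hfibc]
    exact tsum_congr hinnerc
  -- value of A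
  have hAval : ∑' p : ℕ × ℕ, a p
      = (1 - ζ')⁻¹ + (ζ * (1 - ζ)⁻¹ + ∑' p : ℕ × ℕ, c p) := by
    rw [Summable.tsum_prod' ha hfiba, tsum_congr hinnera,
      Summable.tsum_eq_zero_add hg]
    congr 1
    · simp
    · calc ∑' ℓ : ℕ, ζ ^ (ℓ + 1) * (1 - ζ' * q ^ (ℓ + 1))⁻¹
          = ∑' ℓ : ℕ, (ζ ^ (ℓ + 1)
              + ζ ^ (ℓ + 1) * (ζ' * q ^ (ℓ + 1)) * (1 - ζ' * q ^ (ℓ + 1))⁻¹) :=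
            tsum_congr hsplit
        _ = (∑' ℓ : ℕ, ζ ^ (ℓ + 1))
              + ∑' ℓ : ℕ, ζ ^ (ℓ + 1) * (ζ' * q ^ (ℓ + 1)) * (1 - ζ' * q ^ (ℓ + 1))⁻¹ :=
            Summable.tsum_add hs1 hh
        _ = ζ * (1 - ζ)⁻¹ + ∑' p : ℕ × ℕ, c p := by rw [hshiftsum, hCval]
  -- the right-hand side sum splits
  have hRHS : (∑' p : ℕ × ℕ,
        (ζ ^ (p.1 + 1) * ζ' ^ (p.2 + 1) - ζ ^ (-(p.1 + 1) : ℤ) * ζ' ^ (-(p.2 + 1) : ℤ))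
          * q ^ ((p.1 + 1) * (p.2 + 1)))
      = (∑' p : ℕ × ℕ, c p) - ∑' p : ℕ × ℕ, b p := by
    rw [← Summable.tsum_sub hc hb]
    apply tsum_congr
    intro p
    rw [hc_def, hb_def]
    simp only
    ring
  -- the elementary rational identity
  have haux : (1 - ζ')⁻¹ + ζ * (1 - ζ)⁻¹ + (ζ * ζ' - 1) / ((ζ - 1) * (ζ' - 1)) = 0 := by
    have d1 : (1:ℂ) - ζ ≠ 0 := sub_ne_zero.mpr (Ne.symm hζ)
    have d2 : (1:ℂ) - ζ' ≠ 0 := sub_ne_zero.mpr (Ne.symm hζ')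
    have d3 : ζ - 1 ≠ 0 := sub_ne_zero.mpr hζ
    have d4 : ζ' - 1 ≠ 0 := sub_ne_zero.mpr hζ'
    field_simp
    ring
  rw [hAval, hRHS]
  linear_combination haux
end

section
/- For τ ∈ ℍ and z₁, z₂ ∈ ℂ with 0 < Im(z₁), Im(z₂) < Im(τ), the geometric-series rearrangement ∑_{ℓ∈ℤ} ζ₁^ℓ/(1 - ζ₂ q^ℓ) = ∑_{ℓ,m≥1} (ζ₁^ℓ ζ₂^m - ζ₁^{-ℓ} ζ₂^{-m}) q^{ℓm} - (ζ₁ζ₂ - 1)/((ζ₁-1)(ζ₂-1)) holds, provided ζ₁ ≠ 1 and ζ₂ ≠ 1, where ζⱼ = e^{2πizⱼ}, q = e^{2πiτ}. -/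
set_option maxHeartbeats 4000000

open Complex

lemma aux11 (x y q : ℂ) (hx : ‖x‖ < 1) (hy : ‖y‖ < 1) (hqx : ‖q‖ < ‖x‖)
    (hqy : ‖q‖ < ‖y‖) (hx1 : x ≠ 1) (hy1 : y ≠ 1) (hq0 : q ≠ 0) :
    ∑' l : ℤ, x ^ l / (1 - y * q ^ l)
      = (∑' p : ℕ × ℕ, (x ^ (p.1 + 1) * y ^ (p.2 + 1)
            - x ^ (-(p.1 + 1) : ℤ) * y ^ (-(p.2 + 1) : ℤ)) * q ^ ((p.1 + 1) * (p.2 + 1)))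
        - (x * y - 1) / ((x - 1) * (y - 1)) := by
  have hq1 : ‖q‖ < 1 := hqx.trans hx
  have hqpos : 0 < ‖q‖ := norm_pos_iff.mpr hq0
  have hxpos : 0 < ‖x‖ := (norm_nonneg q).trans_lt hqx
  have hypos : 0 < ‖y‖ := (norm_nonneg q).trans_lt hqy
  have hx0 : x ≠ 0 := norm_pos_iff.mp hxpos
  have hy0 : y ≠ 0 := norm_pos_iff.mp hypos
  -- norms of powers of q
  have hqn : ∀ n : ℕ, ‖q‖ ^ n ≤ 1 := fun n => pow_le_one₀ (norm_nonneg q) hq1.le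
  have hyq : ∀ n : ℕ, ‖y * q ^ n‖ < 1 := fun n => by
    rw [norm_mul, norm_pow]
    calc ‖y‖ * ‖q‖ ^ n ≤ ‖y‖ * 1 := by gcongr; exact hqn n
      _ = ‖y‖ := mul_one _
      _ < 1 := hy
  have hden : ∀ n : ℕ, 1 - y * q ^ n ≠ 0 := fun n h => by
    rw [sub_eq_zero] at h
    exact absurd (hyq n) (by rw [← h]; simp)
  have hzpow : ∀ (w : ℂ) (n : ℕ), w ^ (-((n : ℤ) + 1)) = (w ^ (n + 1))⁻¹ := fun w n => by
    rw [show -((n : ℤ) + 1) = -((n + 1 : ℕ) : ℤ) by push_cast; ring, zpow_neg, zpow_natCast]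
  have hqle : ∀ n : ℕ, ‖q‖ ^ (n + 1) ≤ ‖q‖ := fun n => by
    simpa using pow_le_pow_of_le_one (norm_nonneg q) hq1.le (Nat.le_add_left 1 n)
  have hwq : ∀ n : ℕ, ‖q ^ (n + 1) / y‖ < 1 := fun n => by
    rw [norm_div, norm_pow, div_lt_one hypos]
    exact (hqle n).trans_lt hqy
  have hyq' : ∀ n : ℕ, y - q ^ (n + 1) ≠ 0 := fun n h => by
    rw [sub_eq_zero] at h
    have : ‖q ^ (n + 1)‖ < ‖y‖ := by rw [norm_pow]; exact (hqle n).trans_lt hqy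
    rw [← h] at this; exact lt_irrefl _ this
  have geoS : ∀ r : ℝ, 0 ≤ r → r < 1 → Summable (fun n : ℕ => r ^ (n + 1)) := fun r h0 h1 =>
    ((summable_geometric_of_lt_one h0 h1).mul_left r).congr fun n => (pow_succ' r n).symm
  have hA : Summable (fun p : ℕ × ℕ =>
      x ^ (p.1 + 1) * y ^ (p.2 + 1) * q ^ ((p.1 + 1) * (p.2 + 1))) := by
    apply Summable.of_norm_bounded (g := fun p : ℕ × ℕ => ‖x‖ ^ (p.1 + 1) * ‖y‖ ^ (p.2 + 1))
      (Summable.mul_of_nonneg (geoS _ (norm_nonneg x) hx) (geoS _ (norm_nonneg y) hy)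
        (fun n => pow_nonneg (norm_nonneg x) _) (fun n => pow_nonneg (norm_nonneg y) _))
    intro p
    simp only [norm_mul, norm_pow]
    calc ‖x‖ ^ (p.1 + 1) * ‖y‖ ^ (p.2 + 1) * ‖q‖ ^ ((p.1 + 1) * (p.2 + 1))
        ≤ ‖x‖ ^ (p.1 + 1) * ‖y‖ ^ (p.2 + 1) * 1 := by
          gcongr
          exact hqn _
      _ = ‖x‖ ^ (p.1 + 1) * ‖y‖ ^ (p.2 + 1) := mul_one _
  have hB : Summable (fun p : ℕ × ℕ =>
      x ^ (-(p.1 + 1) : ℤ) * y ^ (-(p.2 + 1) : ℤ) * q ^ ((p.1 + 1) * (p.2 + 1))) := by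
    apply Summable.of_norm_bounded
      (g := fun p : ℕ × ℕ => (1 / ‖q‖) * ((‖q‖ / ‖x‖) ^ (p.1 + 1) * (‖q‖ / ‖y‖) ^ (p.2 + 1)))
      (((Summable.mul_of_nonneg (geoS _ (by positivity) ((div_lt_one hxpos).mpr hqx))
          (geoS _ (by positivity) ((div_lt_one hypos).mpr hqy))
          (fun n => by positivity) (fun n => by positivity))).mul_left (1 / ‖q‖))
    rintro ⟨n, m⟩
    show ‖x ^ (-((n : ℤ) + 1)) * y ^ (-((m : ℤ) + 1)) * q ^ ((n + 1) * (m + 1))‖ ≤ _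
    rw [hzpow x n, hzpow y m]
    simp only [norm_mul, norm_inv, norm_pow]
    have key : ‖q‖ ^ ((n + 1) * (m + 1)) ≤ ‖q‖ ^ (n + m + 1) :=
      pow_le_pow_of_le_one (norm_nonneg q) hq1.le (by nlinarith)
    calc (‖x‖ ^ (n + 1))⁻¹ * (‖y‖ ^ (m + 1))⁻¹ * ‖q‖ ^ ((n + 1) * (m + 1))
        ≤ (‖x‖ ^ (n + 1))⁻¹ * (‖y‖ ^ (m + 1))⁻¹ * ‖q‖ ^ (n + m + 1) :=
          mul_le_mul_of_nonneg_left key (by positivity)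
      _ = 1 / ‖q‖ * ((‖q‖ / ‖x‖) ^ (n + 1) * (‖q‖ / ‖y‖) ^ (m + 1)) := by
          have hQ : ‖q‖ ≠ 0 := hqpos.ne'
          have hX : ‖x‖ ≠ 0 := hxpos.ne'
          have hY : ‖y‖ ≠ 0 := hypos.ne'
          rw [div_pow, div_pow, div_mul_div_comm, ← pow_add,
            show (n + 1) + (m + 1) = (n + m + 1) + 1 by ring, pow_succ ‖q‖ (n + m + 1), one_div,
            mul_comm (‖q‖ ^ (n + m + 1)) ‖q‖, mul_div_assoc, ← mul_assoc,
            inv_mul_cancel₀ hQ, one_mul, div_eq_mul_inv, mul_inv]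
          ring
  -- fiberwise geometric sums, positive side
  have hposfib : ∀ n : ℕ, HasSum (fun m : ℕ =>
      x ^ (n + 1) * y ^ (m + 1) * q ^ ((n + 1) * (m + 1)))
      (x ^ (n + 1) * (y * q ^ (n + 1)) * (1 - y * q ^ (n + 1))⁻¹) := by
    intro n
    have hg := (hasSum_geometric_of_norm_lt_one (hyq (n + 1))).mul_left
      (x ^ (n + 1) * (y * q ^ (n + 1)))
    have hfun : (fun m : ℕ => x ^ (n + 1) * (y * q ^ (n + 1)) * (y * q ^ (n + 1)) ^ m)
        = fun m : ℕ => x ^ (n + 1) * y ^ (m + 1) * q ^ ((n + 1) * (m + 1)) := by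
      funext m
      rw [mul_pow, pow_mul]
      ring
    rwa [hfun] at hg
  -- fiberwise geometric sums, negative side
  have hnegfib : ∀ n : ℕ, HasSum (fun m : ℕ =>
      -(x ^ (-(n + 1) : ℤ) * y ^ (-(m + 1) : ℤ) * q ^ ((n + 1) * (m + 1))))
      (x ^ (-(n + 1) : ℤ) / (1 - y * q ^ (-(n + 1) : ℤ))) := by
    intro n
    have hQne : q ^ (n + 1) ≠ 0 := pow_ne_zero _ hq0
    have hqy' : q ^ (n + 1) - y ≠ 0 := sub_ne_zero.mpr (sub_ne_zero.mp (hyq' n)).symm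
    have h2 : (1 : ℂ) - q ^ (n + 1) / y ≠ 0 := by
      have he : (1 : ℂ) - q ^ (n + 1) / y = (y - q ^ (n + 1)) / y := by field_simp
      rw [he]
      exact div_ne_zero (hyq' n) hy0
    have hg := (hasSum_geometric_of_norm_lt_one (hwq n)).mul_left
      (-((x ^ (n + 1))⁻¹ * (q ^ (n + 1) / y)))
    have hfun : (fun m : ℕ => -((x ^ (n + 1))⁻¹ * (q ^ (n + 1) / y)) * (q ^ (n + 1) / y) ^ m)
        = fun m : ℕ =>
          -(x ^ (-(n + 1) : ℤ) * y ^ (-(m + 1) : ℤ) * q ^ ((n + 1) * (m + 1))) := by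
      funext m
      rw [hzpow, hzpow, pow_mul, div_pow]
      field_simp
      ring
    rw [hfun] at hg
    have he1 : (1 : ℂ) - y * (q ^ (n + 1))⁻¹ = (q ^ (n + 1) - y) / q ^ (n + 1) := by
      field_simp
    have he2' : (1 : ℂ) - q ^ (n + 1) / y = (y - q ^ (n + 1)) / y := by field_simp
    convert hg using 1
    · rfl
    rw [hzpow, hzpow, he1, he2', div_div_eq_mul_div, inv_div]
    rw [div_eq_iff hqy']
    field_simp [hyq' n]
    ring
  -- positive part assembled
  have hpos1 : HasSum (fun n : ℕ => x ^ (n + 1) * (y * q ^ (n + 1)) * (1 - y * q ^ (n + 1))⁻¹)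
      (∑' p : ℕ × ℕ, x ^ (p.1 + 1) * y ^ (p.2 + 1) * q ^ ((p.1 + 1) * (p.2 + 1))) :=
    HasSum.prod_fiberwise hA.hasSum hposfib
  have hgeoX : HasSum (fun n : ℕ => x ^ (n + 1)) (x * (1 - x)⁻¹) := by
    have hg := (hasSum_geometric_of_norm_lt_one hx).mul_left x
    have hfun : (fun n : ℕ => x * x ^ n) = fun n : ℕ => x ^ (n + 1) := by
      funext n; rw [← pow_succ']
    rwa [hfun] at hg
  have hposshift : HasSum (fun n : ℕ => x ^ (n + 1) / (1 - y * q ^ (n + 1)))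
      (x * (1 - x)⁻¹
        + ∑' p : ℕ × ℕ, x ^ (p.1 + 1) * y ^ (p.2 + 1) * q ^ ((p.1 + 1) * (p.2 + 1))) := by
    have hg := hgeoX.add hpos1
    have hfun : (fun n : ℕ =>
          x ^ (n + 1) + x ^ (n + 1) * (y * q ^ (n + 1)) * (1 - y * q ^ (n + 1))⁻¹)
        = fun n : ℕ => x ^ (n + 1) / (1 - y * q ^ (n + 1)) := by
      funext n
      have h := hden (n + 1)
      field_simp
      ring
    rwa [hfun] at hg
  have hposnat : HasSum (fun n : ℕ => x ^ n / (1 - y * q ^ n))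
      ((x * (1 - x)⁻¹
        + ∑' p : ℕ × ℕ, x ^ (p.1 + 1) * y ^ (p.2 + 1) * q ^ ((p.1 + 1) * (p.2 + 1)))
        + (1 - y)⁻¹) := by
    have hg := (hasSum_nat_add_iff (f := fun n : ℕ => x ^ n / (1 - y * q ^ n)) 1).mp hposshift
    simpa using hg
  have hposint : HasSum (fun n : ℕ => x ^ (n : ℤ) / (1 - y * q ^ (n : ℤ)))
      ((x * (1 - x)⁻¹
        + ∑' p : ℕ × ℕ, x ^ (p.1 + 1) * y ^ (p.2 + 1) * q ^ ((p.1 + 1) * (p.2 + 1)))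
        + (1 - y)⁻¹) := by
    have hfun : (fun n : ℕ => x ^ n / (1 - y * q ^ n))
        = fun n : ℕ => x ^ (n : ℤ) / (1 - y * q ^ (n : ℤ)) := by
      funext n; rw [zpow_natCast, zpow_natCast]
    rwa [hfun] at hposnat
  -- negative part assembled
  have hnegnat : HasSum (fun n : ℕ => x ^ (-(n + 1) : ℤ) / (1 - y * q ^ (-(n + 1) : ℤ)))
      (-∑' p : ℕ × ℕ,
        x ^ (-(p.1 + 1) : ℤ) * y ^ (-(p.2 + 1) : ℤ) * q ^ ((p.1 + 1) * (p.2 + 1))) :=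
    HasSum.prod_fiberwise hB.hasSum.neg hnegfib
  have htot : HasSum (fun l : ℤ => x ^ l / (1 - y * q ^ l))
      (((x * (1 - x)⁻¹
        + ∑' p : ℕ × ℕ, x ^ (p.1 + 1) * y ^ (p.2 + 1) * q ^ ((p.1 + 1) * (p.2 + 1)))
        + (1 - y)⁻¹)
        + -∑' p : ℕ × ℕ,
          x ^ (-(p.1 + 1) : ℤ) * y ^ (-(p.2 + 1) : ℤ) * q ^ ((p.1 + 1) * (p.2 + 1))) :=
    HasSum.of_nat_of_neg_add_one hposint hnegnat
  have hsub := hA.hasSum.sub hB.hasSum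
  have hfunRS : (fun p : ℕ × ℕ => x ^ (p.1 + 1) * y ^ (p.2 + 1) * q ^ ((p.1 + 1) * (p.2 + 1))
        - x ^ (-(p.1 + 1) : ℤ) * y ^ (-(p.2 + 1) : ℤ) * q ^ ((p.1 + 1) * (p.2 + 1)))
      = fun p : ℕ × ℕ => (x ^ (p.1 + 1) * y ^ (p.2 + 1)
          - x ^ (-(p.1 + 1) : ℤ) * y ^ (-(p.2 + 1) : ℤ)) * q ^ ((p.1 + 1) * (p.2 + 1)) := by
    funext p; ring
  rw [hfunRS] at hsub
  rw [htot.tsum_eq, hsub.tsum_eq]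
  have h1x : (1 : ℂ) - x ≠ 0 := fun h => hx1 (by rw [sub_eq_zero] at h; exact h.symm)
  have h1y : (1 : ℂ) - y ≠ 0 := fun h => hy1 (by rw [sub_eq_zero] at h; exact h.symm)
  have hx1' : x - 1 ≠ 0 := sub_ne_zero.mpr hx1
  have hy1' : y - 1 ≠ 0 := sub_ne_zero.mpr hy1
  have hc : x * (1 - x)⁻¹ + (1 - y)⁻¹ = -((x * y - 1) / ((x - 1) * (y - 1))) := by
    field_simp
    ring
  linear_combination hc

theorem stmt11 (τ z₁ z₂ : ℂ) (hτ : 0 < τ.im)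
    (h₁ : 0 < z₁.im) (h₁' : z₁.im < τ.im) (h₂ : 0 < z₂.im) (h₂' : z₂.im < τ.im)
    (hz₁ : Complex.exp (2 * Real.pi * Complex.I * z₁) ≠ 1)
    (hz₂ : Complex.exp (2 * Real.pi * Complex.I * z₂) ≠ 1) :
    ∑' l : ℤ, Complex.exp (2 * Real.pi * Complex.I * z₁) ^ l /
        (1 - Complex.exp (2 * Real.pi * Complex.I * z₂) *
          Complex.exp (2 * Real.pi * Complex.I * τ) ^ l)
      = (∑' p : ℕ × ℕ,
          (Complex.exp (2 * Real.pi * Complex.I * z₁) ^ (p.1 + 1) *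
              Complex.exp (2 * Real.pi * Complex.I * z₂) ^ (p.2 + 1)
            - Complex.exp (2 * Real.pi * Complex.I * z₁) ^ (-(p.1 + 1) : ℤ) *
              Complex.exp (2 * Real.pi * Complex.I * z₂) ^ (-(p.2 + 1) : ℤ))
            * Complex.exp (2 * Real.pi * Complex.I * τ) ^ ((p.1 + 1) * (p.2 + 1)))
        - (Complex.exp (2 * Real.pi * Complex.I * z₁) *
              Complex.exp (2 * Real.pi * Complex.I * z₂) - 1) /
          ((Complex.exp (2 * Real.pi * Complex.I * z₁) - 1) *
            (Complex.exp (2 * Real.pi * Complex.I * z₂) - 1)) := by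
  have hnorm : ∀ z : ℂ, ‖Complex.exp (2 * Real.pi * Complex.I * z)‖
      = Real.exp (-(2 * Real.pi * z.im)) := by
    intro z
    rw [Complex.norm_exp]
    congr 1
    simp [Complex.mul_re, Complex.mul_im]
  have hπ := Real.pi_pos
  apply aux11
  · rw [hnorm]; exact Real.exp_lt_one_iff.mpr (by nlinarith)
  · rw [hnorm]; exact Real.exp_lt_one_iff.mpr (by nlinarith)
  · rw [hnorm, hnorm]; exact Real.exp_lt_exp.mpr (by nlinarith)
  · rw [hnorm, hnorm]; exact Real.exp_lt_exp.mpr (by nlinarith)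
  · exact hz₁
  · exact hz₂
  · exact Complex.exp_ne_zero _
end

section
/- The μ-function satisfies μ(z₁, z₂; τ) + ζ₂ζ₁⁻¹ q^{-1/2} μ(z₁+τ, z₂; τ) = -i ζ₂^{1/2} ζ₁^{-1/2} q^{-1/8} for all z₁, z₂ ∈ ℂ \ (ℤτ + ℤ), where ζⱼ = e^{2πizⱼ}, ζⱼ^{1/2} = e^{πizⱼ}, and q^{s} = e^{2πisτ}. -/
/-- The Jacobi theta function ϑ(z;τ) = ∑_{n ∈ 1/2+ℤ} q^{n²/2} e^{2πi(z+1/2)n}. -/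
noncomputable def jTheta (z τ : ℂ) : ℂ :=
  ∑' n : ℤ, Complex.exp (Real.pi * Complex.I * τ * ((n : ℂ) + 1 / 2) ^ 2) *
    Complex.exp (2 * Real.pi * Complex.I * (z + 1 / 2) * ((n : ℂ) + 1 / 2))

/-- Zwegers' μ-function, μ(z₁,z₂;τ) = (ζ₁^{1/2}/ϑ(z₂;τ)) ∑_{n∈ℤ} (-ζ₂)ⁿ q^{n(n+1)/2}/(1-ζ₁qⁿ). -/
noncomputable def mu (z₁ z₂ τ : ℂ) : ℂ :=
  Complex.exp (Real.pi * Complex.I * z₁) / jTheta z₂ τ *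
    ∑' n : ℤ, (-Complex.exp (2 * Real.pi * Complex.I * z₂)) ^ n *
        Complex.exp (Real.pi * Complex.I * τ * (n : ℂ) * ((n : ℂ) + 1)) /
      (1 - Complex.exp (2 * Real.pi * Complex.I * z₁) *
        Complex.exp (2 * Real.pi * Complex.I * τ) ^ n)

/-- `z` does not lie in the lattice ℤτ + ℤ. -/
def NotLattice (z τ : ℂ) : Prop := ∀ m n : ℤ, z ≠ m * τ + n

open Complex

noncomputable section ZwAux

/-- term of jTheta -/
noncomputable def jt (n : ℤ) (z τ : ℂ) : ℂ :=
  Complex.exp (Real.pi * Complex.I * τ * ((n : ℂ) + 1 / 2) ^ 2) *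
    Complex.exp (2 * Real.pi * Complex.I * (z + 1 / 2) * ((n : ℂ) + 1 / 2))

lemma jTheta_def (z τ : ℂ) : jTheta z τ = ∑' n : ℤ, jt n z τ := rfl

lemma jt_eq (n : ℤ) (z τ : ℂ) :
    jt n z τ = cexp (Real.pi * I * τ / 4 + Real.pi * I * (z + 1/2)) *
      jacobiTheta₂_term n (z + (1 + τ) / 2) τ := by
  rw [jt, jacobiTheta₂_term, ← Complex.exp_add, ← Complex.exp_add]
  congr 1
  ring

lemma jTheta_eq (z τ : ℂ) :
    jTheta z τ = cexp (Real.pi * I * τ / 4 + Real.pi * I * (z + 1/2)) *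
      jacobiTheta₂ (z + (1 + τ) / 2) τ := by
  rw [jTheta_def, jacobiTheta₂, ← tsum_mul_left]
  exact tsum_congr fun n => jt_eq n z τ

lemma summable_jt {τ : ℂ} (hτ : 0 < τ.im) (z : ℂ) : Summable fun n : ℤ => jt n z τ := by
  simp_rw [jt_eq]
  exact ((summable_jacobiTheta₂_term_iff _ τ).mpr hτ).mul_left _

lemma summable_norm_theta {τ : ℂ} (hτ : 0 < τ.im) (z : ℂ) :
    Summable fun n : ℤ => ‖jacobiTheta₂_term n z τ‖ := by
  apply Summable.of_nonneg_of_le (fun n => norm_nonneg _)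
    (fun n => norm_jacobiTheta₂_term_le hτ (le_refl |z.im|) (le_refl τ.im) n)
  simpa using summable_pow_mul_jacobiTheta₂_term_bound |z.im| hτ 0

lemma jTheta_add_int_mul_tau (z τ : ℂ) (m : ℤ) :
    jTheta (z + m * τ) τ =
      cexp (-(Real.pi * I * τ * m ^ 2) - 2 * Real.pi * I * m * z - Real.pi * I * m) *
        jTheta z τ := by
  rw [jTheta_def, jTheta_def]
  conv_rhs => rw [← tsum_mul_left, ← (Equiv.addRight m).tsum_eq]
  refine tsum_congr fun n => ?_
  simp only [Equiv.coe_addRight, jt, ← Complex.exp_add, Int.cast_add]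
  congr 1
  ring

lemma jTheta_tau_add_int (z τ : ℂ) (m : ℤ) :
    jTheta z (τ + m) = cexp (Real.pi * I * m / 4) * jTheta z τ := by
  rw [jTheta_def, jTheta_def, ← tsum_mul_left]
  refine tsum_congr fun n => ?_
  have hev : ∃ k : ℤ, n ^ 2 + n = 2 * k := by
    obtain ⟨r, hr⟩ := Int.even_mul_succ_self n
    refine ⟨r, by rw [sq]; rw [mul_add, mul_one] at hr; omega⟩
  obtain ⟨k, hk⟩ := hev
  have h1 : cexp (Real.pi * I * m * ((n : ℂ) ^ 2 + n)) = 1 := by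
    have : (Real.pi : ℂ) * I * m * ((n : ℂ) ^ 2 + n) = ((m * k : ℤ) : ℂ) * (2 * Real.pi * I) := by
      have : ((n : ℂ) ^ 2 + n) = ((2 * k : ℤ) : ℂ) := by exact_mod_cast congrArg (Int.cast : ℤ → ℂ) hk
      rw [this]; push_cast; ring
    rw [this, Complex.exp_int_mul_two_pi_mul_I]
  rw [jt, jt, ← Complex.exp_add, ← Complex.exp_add, ← Complex.exp_add]
  have : Real.pi * I * (τ + m) * ((n : ℂ) + 1 / 2) ^ 2
        + 2 * Real.pi * I * (z + 1 / 2) * ((n : ℂ) + 1 / 2)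
      = Real.pi * I * m * ((n : ℂ) ^ 2 + n) +
        (Real.pi * I * m / 4 + (Real.pi * I * τ * ((n : ℂ) + 1 / 2) ^ 2
          + 2 * Real.pi * I * (z + 1 / 2) * ((n : ℂ) + 1 / 2))) := by ring
  rw [this, Complex.exp_add, h1, one_mul]

lemma jTheta_S {τ : ℂ} (hτ : 0 < τ.im) (z : ℂ) :
    ∃ u : ℂ, u ≠ 0 ∧ jTheta z τ = u * jTheta (z / τ) (-1 / τ) := by
  have h0 : τ ≠ 0 := by intro h; rw [h] at hτ; simp at hτ
  set w : ℂ := z + τ / 2 - 1 / 2 with hw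
  refine ⟨cexp (Real.pi * I * τ / 4 + Real.pi * I * (z + 1/2)) *
      (1 / (-I * τ) ^ (1 / 2 : ℂ)) * cexp (-Real.pi * I * w ^ 2 / τ) *
      (cexp (Real.pi * I * (-1/τ) / 4 + Real.pi * I * (z/τ + 1/2)))⁻¹, ?_, ?_⟩
  · apply mul_ne_zero; apply mul_ne_zero; apply mul_ne_zero
    · exact Complex.exp_ne_zero _
    · rw [one_div, ne_eq, inv_eq_zero, Complex.cpow_eq_zero_iff]
      simp only [not_and_or, not_not]
      exact Or.inl (mul_ne_zero (neg_ne_zero.mpr I_ne_zero) h0)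
    · exact Complex.exp_ne_zero _
    · exact inv_ne_zero (Complex.exp_ne_zero _)
  · have e1 : jTheta z τ = cexp (Real.pi * I * τ / 4 + Real.pi * I * (z + 1/2)) *
        jacobiTheta₂ w τ := by
      rw [jTheta_eq]
      have harg : z + (1 + τ) / 2 = w + 1 := by rw [hw]; ring
      rw [harg, jacobiTheta₂_add_left]
    have e2 := jacobiTheta₂_functional_equation w τ
    have e3 : jTheta (z / τ) (-1 / τ) =
        cexp (Real.pi * I * (-1/τ) / 4 + Real.pi * I * (z/τ + 1/2)) *
          jacobiTheta₂ (w / τ) (-1 / τ) := by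
      rw [jTheta_eq]
      congr 2
      rw [hw]
      field_simp
      ring
    rw [e1, e2, e3]
    have hE : cexp (Real.pi * I * (-1/τ) / 4 + Real.pi * I * (z/τ + 1/2)) ≠ 0 :=
      Complex.exp_ne_zero _
    field_simp



lemma exp_neg_half_pi_le : Real.exp (-(Real.pi / 2)) ≤ 1/4 := by
  rw [Real.exp_neg]
  rw [inv_le_comm₀ (Real.exp_pos _) (by norm_num)]
  have h1 : Real.exp (Real.pi / 2) = Real.exp 1 * Real.exp (Real.pi / 2 - 1) := by
    rw [← Real.exp_add]; ring_nf
  have h2 : (2.7182818283 : ℝ) < Real.exp 1 := Real.exp_one_gt_d9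
  have h3 : Real.pi / 2 - 1 + 1 ≤ Real.exp (Real.pi / 2 - 1) := Real.add_one_le_exp _
  have h4 : (3.141592 : ℝ) < Real.pi := Real.pi_gt_d6
  rw [h1]
  nlinarith

variable {z τ : ℂ}

local notation "E" => cexp (Real.pi * I * (z + 1/2))

lemma hE_ne : cexp (Real.pi * I * (z + 1/2)) ≠ 0 := Complex.exp_ne_zero _

lemma identity1 (n : ℕ) : jt (n : ℤ) z τ + jt (-(n+1) : ℤ) z τ
    = cexp (Real.pi * I * τ * ((((n:ℝ)+1/2)^2 : ℝ) : ℂ)) *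
      (E^(2*n+1) + (E^(2*n+1))⁻¹) := by
  have h1 : cexp (2*(Real.pi:ℂ)*I*(z+1/2)*(((n:ℤ):ℂ)+1/2)) = E^(2*n+1) := by
    rw [← Complex.exp_nat_mul]; congr 1; push_cast; ring
  have h2 : cexp (2*(Real.pi:ℂ)*I*(z+1/2)*(((-(n+1):ℤ):ℂ)+1/2)) = (E^(2*n+1))⁻¹ := by
    rw [← Complex.exp_nat_mul, ← Complex.exp_neg]; congr 1; push_cast; ring
  have h3 : cexp ((Real.pi:ℂ)*I*τ*(((n:ℤ):ℂ)+1/2)^2)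
      = cexp (Real.pi * I * τ * ((((n:ℝ)+1/2)^2 : ℝ) : ℂ)) := by
    congr 1; push_cast; ring
  have h4 : cexp ((Real.pi:ℂ)*I*τ*(((-(n+1):ℤ):ℂ)+1/2)^2)
      = cexp (Real.pi * I * τ * ((((n:ℝ)+1/2)^2 : ℝ) : ℂ)) := by
    congr 1; push_cast; ring
  rw [jt, jt, h1, h2, h3, h4]; ring

lemma identity2 {e : ℂ} (he : e ≠ 0) (n : ℕ) : e^(2*n+1) + (e^(2*n+1))⁻¹
    = (e + e⁻¹) * (e^(2*n))⁻¹ * ∑ k ∈ Finset.range (2*n+1), (-e^2)^k := by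
  have h := geom_sum_mul (-e^2) (2*n+1)
  have hodd : (-e^2)^(2*n+1) = -(e^2)^(2*n+1) := Odd.neg_pow ⟨n, by ring⟩ _
  rw [hodd] at h
  have hS : (e^2+1) * (∑ k ∈ Finset.range (2*n+1), (-e^2)^k) = (e^2)^(2*n+1) + 1 := by
    linear_combination -h
  have hf : e^(2*n+1) ≠ 0 := pow_ne_zero _ he
  have ha : e + e⁻¹ = (e^2+1) * e⁻¹ := by
    field_simp
  have h2 : (e + e⁻¹) * (e^(2*n))⁻¹ * ∑ k ∈ Finset.range (2*n+1), (-e^2)^k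
      = ((e^2+1) * ∑ k ∈ Finset.range (2*n+1), (-e^2)^k) * (e^(2*n+1))⁻¹ := by
    rw [ha, pow_succ e (2*n), mul_inv]
    ring
  rw [h2, hS, pow_right_comm]
  field_simp

lemma norm_cexp' (w : ℂ) : ‖cexp w‖ = Real.exp w.re := by
  rw [Complex.norm_exp]

lemma re_piI_mul (w : ℂ) : ((Real.pi : ℂ) * I * w).re = -(Real.pi * w.im) := by
  rw [mul_assoc, re_ofReal_mul, I_mul_re]
  ring

lemma norm_cexp_piI_mul (w : ℂ) : ‖cexp ((Real.pi : ℂ) * I * w)‖ = Real.exp (-(Real.pi * w.im)) := by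
  rw [norm_cexp', re_piI_mul]

lemma norm_cexp_Q (τ : ℂ) (r : ℝ) :
    ‖cexp ((Real.pi : ℂ) * I * τ * (r : ℂ))‖ = Real.exp (-(Real.pi * r * τ.im)) := by
  have : (Real.pi : ℂ) * I * τ * (r : ℂ) = (Real.pi : ℂ) * I * (τ * (r:ℂ)) := by ring
  rw [this, norm_cexp_piI_mul]
  congr 1
  rw [mul_comm τ, im_ofReal_mul]
  ring

lemma two_mul_add_one_le_three_pow (m : ℕ) : (2*m+1 : ℝ) ≤ 3^m := by
  induction m with
  | zero => norm_num
  | succ k ih =>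
    have h3 : (1:ℝ) ≤ 3^k := one_le_pow₀ (by norm_num)
    push_cast [pow_succ] at *
    nlinarith

lemma jTheta_base_ne_zero {z τ : ℂ} (ht : 1/2 ≤ τ.im)
    (ha : |z.im| ≤ τ.im / 2) (hz : ∀ k : ℤ, z ≠ (k : ℂ)) :
    (∑' n : ℤ, jt n z τ) ≠ 0 := by
  have hτ : 0 < τ.im := lt_of_lt_of_le (by norm_num) ht
  set t := τ.im with htdef
  set x := Real.exp (-(Real.pi * t)) with hxdef
  have hx0 : 0 < x := Real.exp_pos _
  have hx4 : x ≤ 1/4 := by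
    calc x ≤ Real.exp (-(Real.pi/2)) := by
          apply Real.exp_le_exp.mpr
          nlinarith [Real.pi_pos]
      _ ≤ 1/4 := exp_neg_half_pi_le
  set e : ℂ := cexp (Real.pi * I * (z + 1/2)) with hedef
  have he0 : e ≠ 0 := Complex.exp_ne_zero _
  -- main factor nonzero
  have hne : e + e⁻¹ ≠ 0 := by
    intro hcon
    have h2 : e * e = -1 := by
      have h3 : e * (e + e⁻¹) = 0 := by rw [hcon, mul_zero]
      rw [mul_add, mul_inv_cancel₀ he0] at h3
      linear_combination h3
    have h5 : cexp ((Real.pi:ℂ)*I*(z+1/2) + Real.pi*I*(z+1/2)) = -1 := by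
      rw [Complex.exp_add]; exact h2
    rw [show ((Real.pi:ℂ)*I*(z+1/2) + Real.pi*I*(z+1/2)) = 2*Real.pi*I*z + Real.pi*I by ring,
      Complex.exp_add, Complex.exp_pi_mul_I, mul_neg_one] at h5
    have h4 : cexp (2*Real.pi*I*z) = 1 := neg_injective h5
    obtain ⟨k, hk⟩ := Complex.exp_eq_one_iff.mp h4
    apply hz k
    have hπ : (2*(Real.pi:ℂ)*I) ≠ 0 := by
      simp [Real.pi_ne_zero, I_ne_zero]
    apply mul_left_cancel₀ hπ
    linear_combination hk
  -- split the sum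
  set F : ℤ → ℂ := fun n => jt n z τ with hFdef
  have hsumF : Summable F := summable_jt hτ z
  have hsum1 : Summable (fun n : ℕ => F n) :=
    hsumF.comp_injective Nat.cast_injective
  have hinj2 : Function.Injective (fun n : ℕ => (-(n+1) : ℤ)) := by
    intro a b h; simp only at h; omega
  have hsum2 : Summable (fun n : ℕ => F (-(n+1))) := hsumF.comp_injective hinj2
  set G : ℕ → ℂ := fun n => F n + F (-(n+1)) with hGdef
  have hGsum : Summable G := hsum1.add hsum2
  have hsplit : ∑' n : ℤ, F n = G 0 + ∑' n : ℕ, G (n+1) := by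
    rw [tsum_of_nat_of_neg_add_one hsum1 hsum2, ← Summable.tsum_add hsum1 hsum2]
    exact Summable.tsum_eq_zero_add hGsum
  -- closed form for G n
  have hGeq : ∀ n : ℕ, G n = cexp (Real.pi * I * τ * ((((n:ℝ)+1/2)^2 : ℝ) : ℂ)) *
      ((e + e⁻¹) * ((e^(2*n))⁻¹ * ∑ k ∈ Finset.range (2*n+1), (-e^2)^k)) := by
    intro n
    have h1 : G n = cexp (Real.pi * I * τ * ((((n:ℝ)+1/2)^2 : ℝ) : ℂ)) *
        (e^(2*n+1) + (e^(2*n+1))⁻¹) := identity1 n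
    rw [h1, identity2 he0 n]
    ring
  -- norms
  have hrho : ‖e‖ = Real.exp (-(Real.pi * z.im)) := by
    rw [hedef, norm_cexp_piI_mul]
    congr 2
    simp
  set C : ℝ := Real.exp (-(Real.pi * (1/4) * t)) * ‖e + e⁻¹‖ with hCdef
  have hC0 : 0 < C := mul_pos (Real.exp_pos _) (norm_pos_iff.mpr hne)
  have hG0 : ‖G 0‖ = C := by
    rw [hGeq 0, norm_mul, norm_cexp_Q]
    congr 1
    · congr 1; norm_num; exact htdef.symm
    · rw [norm_mul]
      have : (e^(2*0))⁻¹ * ∑ k ∈ Finset.range (2*0+1), (-e^2)^k = 1 := by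
        norm_num
      rw [this, norm_one, mul_one]
  have hy1 : Real.exp (-(Real.pi * t)) ≤ 1 :=
    Real.exp_le_one_iff.mpr (by nlinarith [Real.pi_pos])
  -- bound for inner part
  have hinner : ∀ m : ℕ, ‖(e^(2*m))⁻¹ * ∑ k ∈ Finset.range (2*m+1), (-e^2)^k‖
      ≤ (2*m+1 : ℝ) * Real.exp (Real.pi * t * m) := by
    intro m
    rw [norm_mul]
    calc ‖(e^(2*m))⁻¹‖ * ‖∑ k ∈ Finset.range (2*m+1), (-e^2)^k‖
        ≤ ‖(e^(2*m))⁻¹‖ * ∑ k ∈ Finset.range (2*m+1), ‖(-e^2)^k‖ := by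
          gcongr
          exact norm_sum_le _ _
      _ = ∑ k ∈ Finset.range (2*m+1), ‖(e^(2*m))⁻¹‖ * ‖(-e^2)^k‖ := by
          rw [Finset.mul_sum]
      _ ≤ ∑ k ∈ Finset.range (2*m+1), Real.exp (Real.pi * t * m) := by
          apply Finset.sum_le_sum
          intro k hk
          have hk' : k ≤ 2*m := by
            simpa [Nat.lt_succ_iff] using Finset.mem_range.mp hk
          rw [norm_inv, norm_pow, norm_pow, norm_neg, norm_pow, hrho]
          simp only [← Real.exp_nat_mul, ← Real.exp_neg, ← Real.exp_add, Real.exp_le_exp]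
          have h1 : |z.im| * |(m:ℝ) - k| ≤ (t/2) * m := by
            apply mul_le_mul ha _ (abs_nonneg _) (by positivity)
            rw [abs_le]
            have hc : (k:ℝ) ≤ 2*m := by exact_mod_cast hk'
            have hc0 : (0:ℝ) ≤ k := Nat.cast_nonneg k
            constructor <;> push_cast <;> linarith
          have h2 := abs_le.mp (abs_mul z.im ((m:ℝ) - k) ▸ h1)
          have hπ := Real.pi_pos
          push_cast
          nlinarith [h2.1, h2.2]
      _ = (2*m+1 : ℝ) * Real.exp (Real.pi * t * m) := by
          rw [Finset.sum_const, Finset.card_range]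
          push_cast
          ring
  -- bound for G (n+1)
  have hGbound : ∀ n : ℕ, ‖G (n+1)‖ ≤ C * (3*x) * (3*x^2)^n := by
    intro n
    have hi := hinner (n+1)
    have step : ‖G (n+1)‖ ≤ Real.exp (-(Real.pi * ((((n+1:ℕ):ℝ)+1/2)^2) * t)) * ‖e + e⁻¹‖ *
        ((2*(n+1)+1 : ℝ) * Real.exp (Real.pi * t * ((n+1:ℕ):ℝ))) := by
      rw [hGeq (n+1), norm_mul, norm_mul, norm_cexp_Q, ← mul_assoc]
      gcongr
      convert hi using 2
      · rfl
      push_cast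
      ring
    refine step.trans ?_
    have h1 : Real.exp (-(Real.pi * ((((n+1:ℕ):ℝ)+1/2)^2) * t)) * Real.exp (Real.pi * t * ((n+1:ℕ):ℝ))
        = Real.exp (-(Real.pi * (1/4) * t)) * Real.exp (-(Real.pi*t))^((n+1)^2) := by
      rw [← Real.exp_nat_mul, ← Real.exp_add, ← Real.exp_add]
      congr 1
      push_cast
      ring
    have h2 : Real.exp (-(Real.pi*t))^((n+1)^2) ≤ Real.exp (-(Real.pi*t))^(2*n+1) := by
      apply pow_le_pow_of_le_one (Real.exp_pos _).le hy1
      nlinarith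
    have h3 : (2*(n+1)+1 : ℝ) ≤ 3^(n+1) := by
      have := two_mul_add_one_le_three_pow (n+1)
      push_cast at this ⊢
      linarith
    have h4 : (3:ℝ)*Real.exp (-(Real.pi*t))*(3*Real.exp (-(Real.pi*t))^2)^n
        = 3^(n+1) * Real.exp (-(Real.pi*t))^(2*n+1) := by
      rw [mul_pow, ← pow_mul, pow_succ]
      ring
    calc Real.exp (-(Real.pi * ((((n+1:ℕ):ℝ)+1/2)^2) * t)) * ‖e + e⁻¹‖ *
          ((2*(n+1)+1 : ℝ) * Real.exp (Real.pi * t * ((n+1:ℕ):ℝ)))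
        = ‖e + e⁻¹‖ * ((2*(n+1)+1 : ℝ) *
            (Real.exp (-(Real.pi * ((((n+1:ℕ):ℝ)+1/2)^2) * t)) * Real.exp (Real.pi * t * ((n+1:ℕ):ℝ)))) := by
          ring
      _ = ‖e + e⁻¹‖ * ((2*(n+1)+1 : ℝ) *
            (Real.exp (-(Real.pi * (1/4) * t)) * Real.exp (-(Real.pi*t))^((n+1)^2))) := by
          rw [h1]
      _ ≤ ‖e + e⁻¹‖ * ((3:ℝ)^(n+1) *
            (Real.exp (-(Real.pi * (1/4) * t)) * Real.exp (-(Real.pi*t))^(2*n+1))) := by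
          gcongr
      _ = C * (3*x) * (3*x^2)^n := by
          rw [hCdef, hxdef]
          ring
  -- sum the geometric bound
  have h3x2 : 3*x^2 < 1 := by nlinarith
  have hgeo : Summable (fun n : ℕ => C * (3*x) * (3*x^2)^n) :=
    (summable_geometric_of_lt_one (by positivity) h3x2).mul_left _
  have hrest : ‖∑' n : ℕ, G (n+1)‖ < C := by
    have hb : ‖∑' n : ℕ, G (n+1)‖ ≤ ∑' n : ℕ, C * (3*x) * (3*x^2)^n :=
      tsum_of_norm_bounded hgeo.hasSum hGbound
    have hsum : ∑' n : ℕ, C * (3*x) * (3*x^2)^n = C * (3*x) * (1 - 3*x^2)⁻¹ := by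
      rw [tsum_mul_left, tsum_geometric_of_lt_one (by positivity) h3x2]
    have h13 : (0:ℝ) < 1 - 3*x^2 := by nlinarith
    have hx2 : (1 - 3*x^2)⁻¹ ≤ (13/16 : ℝ)⁻¹ := by
      apply inv_anti₀ (by norm_num)
      nlinarith
    have hlt : 3*x*(1-3*x^2)⁻¹ < 1 := by
      calc 3*x*(1-3*x^2)⁻¹ ≤ 3*x*(13/16:ℝ)⁻¹ := by gcongr
        _ ≤ 3*(1/4)*(13/16:ℝ)⁻¹ := by gcongr
        _ < 1 := by norm_num
    have : C * (3*x) * (1 - 3*x^2)⁻¹ < C := by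
      calc C*(3*x)*(1-3*x^2)⁻¹ = C*(3*x*(1-3*x^2)⁻¹) := by ring
        _ < C*1 := mul_lt_mul_of_pos_left hlt hC0
        _ = C := mul_one C
    calc ‖∑' n : ℕ, G (n+1)‖ ≤ ∑' n : ℕ, C * (3*x) * (3*x^2)^n := hb
      _ = C * (3*x) * (1 - 3*x^2)⁻¹ := hsum
      _ < C := this
  -- conclude
  intro hzero
  rw [hsplit] at hzero
  have : G 0 = -∑' n : ℕ, G (n+1) := by linear_combination hzero
  rw [← hG0, this, norm_neg] at hrest
  exact lt_irrefl _ hrest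


lemma jTheta_large_ne_zero {z τ : ℂ} (ht : 1/2 ≤ τ.im) (h : NotLattice z τ) :
    jTheta z τ ≠ 0 := by
  have hτ : 0 < τ.im := by linarith
  set a : ℝ := z.im / τ.im with ha
  set m : ℤ := round a with hm
  have key := jTheta_add_int_mul_tau (z - m*τ) τ m
  have harg : (z - m*τ) + m*τ = z := by ring
  rw [harg] at key
  rw [key]
  apply mul_ne_zero (Complex.exp_ne_zero _)
  rw [jTheta_def]
  apply jTheta_base_ne_zero ht
  · have him : (z - m*τ).im = z.im - m*τ.im := by
      simp [Complex.sub_im, Complex.mul_im]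
    rw [him]
    have h1 : |a - m| ≤ 1/2 := by
      have := abs_sub_round a
      rwa [hm]
    have h2 : z.im - m*τ.im = (a - m)*τ.im := by
      rw [ha, sub_mul, div_mul_cancel₀ _ hτ.ne']
    rw [h2, abs_mul, abs_of_pos hτ]
    calc |a - m| * τ.im ≤ (1/2) * τ.im := by gcongr
      _ = τ.im/2 := by ring
  · intro k hk
    exact h m k (by linear_combination hk)

lemma notLattice_T {z τ : ℂ} (m : ℤ) (h : NotLattice z τ) : NotLattice z (τ + m) := by
  intro p q hpq
  apply h p (p*m + q)
  push_cast at hpq ⊢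
  linear_combination hpq

lemma notLattice_S {z τ : ℂ} (hτ : τ ≠ 0) (h : NotLattice z τ) :
    NotLattice (z/τ) (-1/τ) := by
  intro p q hpq
  apply h q (-p)
  have h2 : z = (p:ℂ) * (-1) + q * τ := by
    field_simp at hpq
    linear_combination hpq
  push_cast
  linear_combination h2

lemma jTheta_descent : ∀ k : ℕ, ∀ τ z : ℂ, 0 < τ.im → 1/2 ≤ 2^k * τ.im → NotLattice z τ →
    jTheta z τ ≠ 0 := by
  intro k
  induction k with
  | zero =>
    intro τ z h0 h1 h2
    exact jTheta_large_ne_zero (by simpa using h1) h2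
  | succ k ih =>
    intro τ z h0 h1 h2
    by_cases hbig : 1/2 ≤ τ.im
    · exact jTheta_large_ne_zero hbig h2
    · push_neg at hbig
      set m : ℤ := -round τ.re with hm
      set τ' : ℂ := τ + m with hτ'
      have hre : |τ'.re| ≤ 1/2 := by
        have h3 : τ'.re = τ.re - round τ.re := by
          rw [hτ', hm]; push_cast; simp [Complex.add_re]; ring
        rw [h3]
        exact abs_sub_round τ.re
      have him' : τ'.im = τ.im := by
        rw [hτ']; simp [Complex.add_im]
      have hτ'0 : τ' ≠ 0 := by
        intro hc
        rw [hc] at him'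
        simp at him'
        linarith
      have hq : 0 < Complex.normSq τ' := Complex.normSq_pos.mpr hτ'0
      have hns : Complex.normSq τ' < 1/2 := by
        rw [Complex.normSq_apply]
        have := abs_le.mp hre
        nlinarith [him', hbig, h0]
      have him2 : (-1/τ').im = τ.im / Complex.normSq τ' := by
        rw [neg_div, Complex.neg_im, one_div, Complex.inv_im, him']
        field_simp
      have h0' : 0 < (-1/τ').im := by
        rw [him2]; exact div_pos h0 hq
      have h1' : 1/2 ≤ 2^k * (-1/τ').im := by
        rw [him2]
        have h4 : 2*τ.im ≤ τ.im/Complex.normSq τ' := by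
          rw [le_div_iff₀ hq]
          nlinarith
        calc (1:ℝ)/2 ≤ 2^(k+1)*τ.im := h1
          _ = 2^k * (2*τ.im) := by ring
          _ ≤ 2^k * (τ.im/Complex.normSq τ') := by gcongr
      have hz' : NotLattice (z/τ') (-1/τ') := notLattice_S hτ'0 (notLattice_T m h2)
      have hth' : jTheta (z/τ') (-1/τ') ≠ 0 := ih _ _ h0' h1' hz'
      obtain ⟨u, hu0, hu⟩ := jTheta_S (him' ▸ h0) z
      have hne' : jTheta z τ' ≠ 0 := by
        rw [hu]; exact mul_ne_zero hu0 hth'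
      intro hcon
      rw [hτ', jTheta_tau_add_int z τ m, hcon, mul_zero] at hne'
      exact hne' rfl

theorem jTheta_ne_zero {z τ : ℂ} (hτ : 0 < τ.im) (h : NotLattice z τ) :
    jTheta z τ ≠ 0 := by
  obtain ⟨k, hk⟩ := pow_unbounded_of_one_lt (1/(2*τ.im)) (one_lt_two (α := ℝ))
  apply jTheta_descent k τ z hτ _ h
  have hp : (0:ℝ) < 2^k := by positivity
  rw [div_lt_iff₀ (by positivity)] at hk
  nlinarith

lemma exp_zpow (w : ℂ) (n : ℤ) : cexp w ^ n = cexp ((n:ℂ) * w) := (Complex.exp_int_mul w n).symm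

lemma hI_half : cexp ((Real.pi:ℂ) * I / 2) = I := by
  have h : ((Real.pi:ℂ) * I / 2) = ((Real.pi/2 : ℝ) : ℂ) * I := by push_cast; ring
  rw [h, Complex.exp_mul_I]
  simp [← Complex.ofReal_cos, ← Complex.ofReal_sin, Real.cos_pi_div_two, Real.sin_pi_div_two]

lemma neg_zeta_zpow (z₂ : ℂ) (n : ℤ) :
    (-cexp (2*Real.pi*I*z₂))^n = cexp ((n:ℂ)*(2*Real.pi*I*z₂ + Real.pi*I)) := by
  have h : -cexp (2*(Real.pi:ℂ)*I*z₂) = cexp (2*Real.pi*I*z₂ + Real.pi*I) := by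
    rw [Complex.exp_add, Complex.exp_pi_mul_I]; ring
  rw [h, exp_zpow]

lemma den_eq (z₁ τ : ℂ) (n : ℤ) :
    cexp (2*Real.pi*I*z₁) * cexp (2*Real.pi*I*τ)^n
      = cexp (2*Real.pi*I*z₁ + (n:ℂ)*(2*Real.pi*I*τ)) := by
  rw [exp_zpow, ← Complex.exp_add]

lemma den_ne {z₁ τ : ℂ} (h₁ : NotLattice z₁ τ) (n : ℤ) :
    1 - cexp (2*Real.pi*I*z₁) * cexp (2*Real.pi*I*τ)^n ≠ 0 := by
  rw [den_eq]
  intro hc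
  have h4 : cexp (2*Real.pi*I*z₁ + (n:ℂ)*(2*Real.pi*I*τ)) = 1 := by linear_combination -hc
  obtain ⟨k, hk⟩ := Complex.exp_eq_one_iff.mp h4
  apply h₁ (-n) k
  have hπ : (2*(Real.pi:ℂ)*I) ≠ 0 := by simp [Real.pi_ne_zero, I_ne_zero]
  apply mul_left_cancel₀ hπ
  push_cast
  linear_combination hk

lemma num_eq (z₂ τ : ℂ) (n : ℤ) :
    (-cexp (2*Real.pi*I*z₂))^n * cexp (Real.pi*I*τ*(n:ℂ)*((n:ℂ)+1))
      = jacobiTheta₂_term n (z₂ + 1/2 + τ/2) τ := by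
  rw [neg_zeta_zpow, jacobiTheta₂_term, ← Complex.exp_add]
  congr 1
  ring

lemma norm_den_inner (z₁ τ : ℂ) (n : ℤ) :
    ‖cexp (2*Real.pi*I*z₁ + (n:ℂ)*(2*Real.pi*I*τ))‖
      = Real.exp (-(2*Real.pi*z₁.im) + (n:ℝ)*(-(2*Real.pi*τ.im))) := by
  have h : 2*(Real.pi:ℂ)*I*z₁ + (n:ℂ)*(2*Real.pi*I*τ) = (Real.pi:ℂ)*I*(2*z₁ + 2*(n:ℂ)*τ) := by
    ring
  rw [h, norm_cexp_piI_mul]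
  congr 1
  simp only [Complex.add_im, Complex.mul_im, Complex.mul_re, Complex.re_ofNat, Complex.im_ofNat,
    Complex.intCast_re, Complex.intCast_im]
  push_cast
  ring

lemma summable_mu_term {τ : ℂ} (hτ : 0 < τ.im) (z₁ z₂ : ℂ) :
    Summable (fun n : ℤ => (-cexp (2*Real.pi*I*z₂))^n * cexp (Real.pi*I*τ*(n:ℂ)*((n:ℂ)+1)) /
      (1 - cexp (2*Real.pi*I*z₁) * cexp (2*Real.pi*I*τ)^n)) := by
  have hnorm : Summable (fun n : ℤ => ‖jacobiTheta₂_term n (z₂ + 1/2 + τ/2) τ‖) :=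
    summable_norm_theta hτ _
  have key : ∀ n : ℤ, ‖cexp (2*Real.pi*I*z₁) * cexp (2*Real.pi*I*τ)^n‖ ≤ 1/2 →
      ‖(-cexp (2*Real.pi*I*z₂))^n * cexp (Real.pi*I*τ*(n:ℂ)*((n:ℂ)+1)) /
        (1 - cexp (2*Real.pi*I*z₁) * cexp (2*Real.pi*I*τ)^n)‖
      ≤ 2 * ‖jacobiTheta₂_term n (z₂ + 1/2 + τ/2) τ‖ := by
    intro n hn
    rw [norm_div, num_eq]
    have h12 : (1:ℝ)/2 ≤ ‖1 - cexp (2*Real.pi*I*z₁) * cexp (2*Real.pi*I*τ)^n‖ := by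
      have h := norm_sub_norm_le (1:ℂ) (cexp (2*Real.pi*I*z₁) * cexp (2*Real.pi*I*τ)^n)
      rw [norm_one] at h
      linarith
    calc ‖jacobiTheta₂_term n (z₂ + 1/2 + τ/2) τ‖ /
          ‖1 - cexp (2*Real.pi*I*z₁) * cexp (2*Real.pi*I*τ)^n‖
        ≤ ‖jacobiTheta₂_term n (z₂ + 1/2 + τ/2) τ‖ / (1/2) := by
          gcongr
      _ = 2 * ‖jacobiTheta₂_term n (z₂ + 1/2 + τ/2) τ‖ := by ring
  have key2 : ∀ n : ℤ, 2 ≤ ‖cexp (2*Real.pi*I*z₁) * cexp (2*Real.pi*I*τ)^n‖ →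
      ‖(-cexp (2*Real.pi*I*z₂))^n * cexp (Real.pi*I*τ*(n:ℂ)*((n:ℂ)+1)) /
        (1 - cexp (2*Real.pi*I*z₁) * cexp (2*Real.pi*I*τ)^n)‖
      ≤ 2 * ‖jacobiTheta₂_term n (z₂ + 1/2 + τ/2) τ‖ := by
    intro n hn
    rw [norm_div, num_eq]
    have h1 : (1:ℝ) ≤ ‖1 - cexp (2*Real.pi*I*z₁) * cexp (2*Real.pi*I*τ)^n‖ := by
      have h := norm_sub_norm_le (cexp (2*Real.pi*I*z₁) * cexp (2*Real.pi*I*τ)^n) (1:ℂ)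
      rw [norm_one, norm_sub_rev] at h
      linarith
    have hnn := norm_nonneg (jacobiTheta₂_term n (z₂ + 1/2 + τ/2) τ)
    calc ‖jacobiTheta₂_term n (z₂ + 1/2 + τ/2) τ‖ /
          ‖1 - cexp (2*Real.pi*I*z₁) * cexp (2*Real.pi*I*τ)^n‖
        ≤ ‖jacobiTheta₂_term n (z₂ + 1/2 + τ/2) τ‖ / 1 := by
          gcongr
      _ ≤ 2 * ‖jacobiTheta₂_term n (z₂ + 1/2 + τ/2) τ‖ := by
          rw [div_one]; linarith
  apply Summable.of_nat_of_neg_add_one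
  · apply Summable.of_norm_bounded_eventually_nat
      (g := fun k : ℕ => 2*‖jacobiTheta₂_term (k:ℤ) (z₂+1/2+τ/2) τ‖)
      ((hnorm.comp_injective Nat.cast_injective).mul_left 2)
    have hB1 : Real.exp (-(2*Real.pi*τ.im)) < 1 :=
      Real.exp_lt_one_iff.mpr (by nlinarith [Real.pi_pos])
    have htend : Filter.Tendsto
        (fun k : ℕ => Real.exp (-(2*Real.pi*z₁.im)) * Real.exp (-(2*Real.pi*τ.im))^k)
        Filter.atTop (nhds 0) := by
      have h0' := (tendsto_pow_atTop_nhds_zero_of_lt_one (Real.exp_nonneg _)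
        hB1).const_mul (Real.exp (-(2*Real.pi*z₁.im)))
      simpa using h0'
    have hev := htend.eventually_lt_const (show (0:ℝ) < 1/2 by norm_num)
    filter_upwards [hev] with k hk
    apply key
    rw [den_eq, norm_den_inner, Real.exp_add]
    have : Real.exp (((k:ℤ):ℝ)*(-(2*Real.pi*τ.im))) = Real.exp (-(2*Real.pi*τ.im))^k := by
      rw [← Real.exp_nat_mul]
      congr 1
      try push_cast
      try ring
    rw [this]
    exact hk.le
  · apply Summable.of_norm_bounded_eventually_nat
      (g := fun k : ℕ => 2*‖jacobiTheta₂_term (-((k:ℤ)+1)) (z₂+1/2+τ/2) τ‖)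
      ((hnorm.comp_injective (by intro a b h; simp only at h; omega : Function.Injective
        (fun n : ℕ => (-((n:ℤ)+1) : ℤ)))).mul_left 2)
    have hC1 : (1:ℝ) < Real.exp (2*Real.pi*τ.im) := by
      rw [← Real.exp_zero, Real.exp_lt_exp]
      positivity
    have htend : Filter.Tendsto
        (fun k : ℕ => (Real.exp (-(2*Real.pi*z₁.im)) * Real.exp (2*Real.pi*τ.im)) *
          Real.exp (2*Real.pi*τ.im)^k) Filter.atTop Filter.atTop :=
      (tendsto_pow_atTop_atTop_of_one_lt hC1).const_mul_atTop
        (by positivity)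
    have hev := htend.eventually_ge_atTop (2:ℝ)
    filter_upwards [hev] with k hk
    apply key2
    rw [den_eq, norm_den_inner, Real.exp_add]
    have h5 : Real.exp ((((-((k:ℤ)+1)):ℤ):ℝ)*(-(2*Real.pi*τ.im)))
        = Real.exp (2*Real.pi*τ.im) * Real.exp (2*Real.pi*τ.im)^k := by
      rw [← Real.exp_nat_mul, ← Real.exp_add]
      congr 1
      push_cast
      ring
    rw [h5]
    calc (2:ℝ) ≤ (Real.exp (-(2*Real.pi*z₁.im)) * Real.exp (2*Real.pi*τ.im)) *
          Real.exp (2*Real.pi*τ.im)^k := hk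
      _ = Real.exp (-(2*Real.pi*z₁.im)) *
          (Real.exp (2*Real.pi*τ.im) * Real.exp (2*Real.pi*τ.im)^k) := by ring

lemma tsum_T (z₂ τ : ℂ) :
    ∑' n : ℤ, (-cexp (2*Real.pi*I*z₂))^n * cexp (Real.pi*I*τ*(n:ℂ)*((n:ℂ)-1))
      = I * cexp (Real.pi*I*z₂) * cexp (-(Real.pi*I*τ)/4) * jTheta z₂ τ := by
  rw [jTheta_def,
    ← Equiv.tsum_eq (Equiv.addRight (1:ℤ))
      (fun n : ℤ => (-cexp (2*Real.pi*I*z₂))^n * cexp (Real.pi*I*τ*(n:ℂ)*((n:ℂ)-1))),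
    ← tsum_mul_left]
  refine tsum_congr fun n => ?_
  simp only [Equiv.coe_addRight]
  have lhs_eq : (-cexp (2*Real.pi*I*z₂))^(n+1) * cexp (Real.pi*I*τ*(((n+1:ℤ)):ℂ)*((((n+1:ℤ)):ℂ)-1))
      = cexp ((Real.pi:ℂ)*I/2 + (Real.pi*I*z₂ + -(Real.pi*I*τ)/4 +
          (Real.pi*I*τ*((n:ℂ)+1/2)^2 + 2*Real.pi*I*(z₂+1/2)*((n:ℂ)+1/2)))) := by
    rw [neg_zeta_zpow, ← Complex.exp_add]
    congr 1
    push_cast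
    ring
  rw [lhs_eq, Complex.exp_add, hI_half, Complex.exp_add, Complex.exp_add, Complex.exp_add, jt]
  ring

lemma mu_term_eq {z₁ z₂ τ : ℂ} (h₁ : NotLattice z₁ τ) (n : ℤ) :
    cexp (Real.pi*I*z₁) * ((-cexp (2*Real.pi*I*z₂))^n * cexp (Real.pi*I*τ*(n:ℂ)*((n:ℂ)+1)) /
        (1 - cexp (2*Real.pi*I*z₁) * cexp (2*Real.pi*I*τ)^n))
    + (cexp (2*Real.pi*I*z₂) * (cexp (2*Real.pi*I*z₁))⁻¹ * cexp (-Real.pi*I*τ) *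
        cexp (Real.pi*I*(z₁+τ))) *
      ((-cexp (2*Real.pi*I*z₂))^(n-1) * cexp (Real.pi*I*τ*((n-1:ℤ):ℂ)*(((n-1:ℤ):ℂ)+1)) /
        (1 - cexp (2*Real.pi*I*(z₁+τ)) * cexp (2*Real.pi*I*τ)^(n-1)))
    = -cexp (-(Real.pi*I*z₁)) *
        ((-cexp (2*Real.pi*I*z₂))^n * cexp (Real.pi*I*τ*(n:ℂ)*((n:ℂ)-1))) := by
  have hd : 1 - cexp (2*Real.pi*I*z₁) * cexp (2*Real.pi*I*τ)^n ≠ 0 := den_ne h₁ n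
  have hden2 : cexp (2*Real.pi*I*(z₁+τ)) * cexp (2*Real.pi*I*τ)^(n-1)
      = cexp (2*Real.pi*I*z₁) * cexp (2*Real.pi*I*τ)^n := by
    rw [exp_zpow, exp_zpow, ← Complex.exp_add, ← Complex.exp_add]
    congr 1
    push_cast
    ring
  have hexpg : cexp (Real.pi*I*τ*((n-1:ℤ):ℂ)*(((n-1:ℤ):ℂ)+1))
      = cexp (Real.pi*I*τ*((n:ℂ)-1)*(n:ℂ)) := by
    congr 1
    push_cast
    ring
  have hzp : (-cexp (2*Real.pi*I*z₂))^(n-1)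
      = (-cexp (2*Real.pi*I*z₂))^n * (-cexp (2*Real.pi*I*z₂))⁻¹ := by
    rw [zpow_sub₀ (neg_ne_zero.mpr (Complex.exp_ne_zero _)), zpow_one, div_eq_mul_inv]
  have hexpg2 : cexp (Real.pi*I*τ*(n:ℂ)*((n:ℂ)-1)) = cexp (Real.pi*I*τ*((n:ℂ)-1)*(n:ℂ)) := by
    congr 1
    ring
  rw [hden2, hexpg, hzp, hexpg2]
  have hc2 : cexp (2*Real.pi*I*z₂) * (cexp (2*Real.pi*I*z₁))⁻¹ * cexp (-Real.pi*I*τ) *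
      cexp (Real.pi*I*(z₁+τ)) = cexp (2*Real.pi*I*z₂) * cexp (-(Real.pi*I*z₁)) := by
    rw [← Complex.exp_neg, ← Complex.exp_add, ← Complex.exp_add, ← Complex.exp_add,
      ← Complex.exp_add]
    congr 1
    ring
  rw [hc2]
  have hkey : cexp (Real.pi*I*z₁) * cexp (Real.pi*I*τ*(n:ℂ)*((n:ℂ)+1))
      = cexp (-(Real.pi*I*z₁)) * cexp (Real.pi*I*τ*((n:ℂ)-1)*(n:ℂ)) *
        (cexp (2*Real.pi*I*z₁) * cexp (2*Real.pi*I*τ)^n) := by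
    rw [exp_zpow, ← Complex.exp_add, ← Complex.exp_add, ← Complex.exp_add, ← Complex.exp_add]
    congr 1
    push_cast
    ring
  have hv : cexp (2*Real.pi*I*z₂) * (-cexp (2*Real.pi*I*z₂))⁻¹ = -1 := by
    rw [inv_neg, mul_neg, mul_inv_cancel₀ (Complex.exp_ne_zero _)]
  set w := (-cexp (2*Real.pi*I*z₂))^n with hw
  set v := (-cexp (2*Real.pi*I*z₂))⁻¹ with hvv
  set X := cexp (Real.pi*I*τ*(n:ℂ)*((n:ℂ)+1)) with hX
  set Y := cexp (Real.pi*I*τ*((n:ℂ)-1)*(n:ℂ)) with hY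
  set u := cexp (2*Real.pi*I*z₁) * cexp (2*Real.pi*I*τ)^n with hu
  set a := cexp (Real.pi*I*z₁) with ha
  set b := cexp (-(Real.pi*I*z₁)) with hb
  set c := cexp (2*Real.pi*I*z₂) with hc
  field_simp
  linear_combination w * hkey + b*w*Y*hv

end ZwAux



theorem stmt14 (τ z₁ z₂ : ℂ) (hτ : 0 < τ.im)
    (h₁ : NotLattice z₁ τ) (h₂ : NotLattice z₂ τ) :
    mu z₁ z₂ τ
        + Complex.exp (2 * Real.pi * Complex.I * z₂) *
            (Complex.exp (2 * Real.pi * Complex.I * z₁))⁻¹ *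
            Complex.exp (-Real.pi * Complex.I * τ) * mu (z₁ + τ) z₂ τ
      = -Complex.I * Complex.exp (Real.pi * Complex.I * z₂) *
          Complex.exp (-Real.pi * Complex.I * z₁) *
          Complex.exp (-Real.pi * Complex.I * τ / 4) := by
  have hθ : jTheta z₂ τ ≠ 0 := jTheta_ne_zero hτ h₂
  have hsf := summable_mu_term hτ z₁ z₂
  have hsg := summable_mu_term hτ (z₁+τ) z₂
  have hinj : Function.Injective (fun n : ℤ => n - 1) := fun a b h => by simpa using h
  have hsg' : Summable (fun n : ℤ => (-cexp (2*Real.pi*I*z₂))^(n-1) *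
      cexp (Real.pi*I*τ*((n-1:ℤ):ℂ)*(((n-1:ℤ):ℂ)+1)) /
      (1 - cexp (2*Real.pi*I*(z₁+τ)) * cexp (2*Real.pi*I*τ)^(n-1))) :=
    (hsg.comp_injective hinj).congr (fun n => rfl)
  have hshift : (∑' n : ℤ, (-cexp (2*Real.pi*I*z₂))^(n-1) *
      cexp (Real.pi*I*τ*((n-1:ℤ):ℂ)*(((n-1:ℤ):ℂ)+1)) /
      (1 - cexp (2*Real.pi*I*(z₁+τ)) * cexp (2*Real.pi*I*τ)^(n-1)))
      = ∑' n : ℤ, (-cexp (2*Real.pi*I*z₂))^n *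
        cexp (Real.pi*I*τ*(n:ℂ)*((n:ℂ)+1)) /
        (1 - cexp (2*Real.pi*I*(z₁+τ)) * cexp (2*Real.pi*I*τ)^n) := by
    have h := Equiv.tsum_eq (Equiv.subRight (1:ℤ))
      (fun n : ℤ => (-cexp (2*Real.pi*I*z₂))^n *
        cexp (Real.pi*I*τ*(n:ℂ)*((n:ℂ)+1)) /
        (1 - cexp (2*Real.pi*I*(z₁+τ)) * cexp (2*Real.pi*I*τ)^n))
    rw [← h]
    exact tsum_congr fun n => by simp only [Equiv.subRight_apply]
  have hcomb : cexp (Real.pi*I*z₁) * (∑' n : ℤ, (-cexp (2*Real.pi*I*z₂))^n *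
        cexp (Real.pi*I*τ*(n:ℂ)*((n:ℂ)+1)) /
        (1 - cexp (2*Real.pi*I*z₁) * cexp (2*Real.pi*I*τ)^n))
      + (cexp (2*Real.pi*I*z₂) * (cexp (2*Real.pi*I*z₁))⁻¹ * cexp (-Real.pi*I*τ) *
          cexp (Real.pi*I*(z₁+τ))) * (∑' n : ℤ, (-cexp (2*Real.pi*I*z₂))^n *
        cexp (Real.pi*I*τ*(n:ℂ)*((n:ℂ)+1)) /
        (1 - cexp (2*Real.pi*I*(z₁+τ)) * cexp (2*Real.pi*I*τ)^n))
      = -cexp (-(Real.pi*I*z₁)) *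
          (I * cexp (Real.pi*I*z₂) * cexp (-(Real.pi*I*τ)/4) * jTheta z₂ τ) := by
    rw [← hshift, ← tsum_mul_left, ← tsum_mul_left,
      ← Summable.tsum_add (hsf.mul_left _) (hsg'.mul_left _),
      ← tsum_T z₂ τ, ← tsum_mul_left]
    exact tsum_congr fun n => mu_term_eq h₁ n
  unfold mu
  have expand : cexp (Real.pi * I * z₁) / jTheta z₂ τ * (∑' n : ℤ, (-cexp (2*Real.pi*I*z₂))^n *
        cexp (Real.pi*I*τ*(n:ℂ)*((n:ℂ)+1)) /
        (1 - cexp (2*Real.pi*I*z₁) * cexp (2*Real.pi*I*τ)^n))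
      + cexp (2*Real.pi*I*z₂) * (cexp (2*Real.pi*I*z₁))⁻¹ * cexp (-Real.pi*I*τ) *
        (cexp (Real.pi * I * (z₁+τ)) / jTheta z₂ τ * (∑' n : ℤ, (-cexp (2*Real.pi*I*z₂))^n *
          cexp (Real.pi*I*τ*(n:ℂ)*((n:ℂ)+1)) /
          (1 - cexp (2*Real.pi*I*(z₁+τ)) * cexp (2*Real.pi*I*τ)^n)))
      = (cexp (Real.pi*I*z₁) * (∑' n : ℤ, (-cexp (2*Real.pi*I*z₂))^n *
          cexp (Real.pi*I*τ*(n:ℂ)*((n:ℂ)+1)) /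
          (1 - cexp (2*Real.pi*I*z₁) * cexp (2*Real.pi*I*τ)^n))
        + (cexp (2*Real.pi*I*z₂) * (cexp (2*Real.pi*I*z₁))⁻¹ * cexp (-Real.pi*I*τ) *
            cexp (Real.pi*I*(z₁+τ))) * (∑' n : ℤ, (-cexp (2*Real.pi*I*z₂))^n *
          cexp (Real.pi*I*τ*(n:ℂ)*((n:ℂ)+1)) /
          (1 - cexp (2*Real.pi*I*(z₁+τ)) * cexp (2*Real.pi*I*τ)^n))) / jTheta z₂ τ := by
    field_simp
  rw [expand, hcomb]
  rw [show cexp (-Real.pi*I*z₁) = cexp (-(Real.pi*I*z₁)) by congr 1; ring,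
    show cexp (-Real.pi*I*τ/4) = cexp (-(Real.pi*I*τ)/4) by congr 1; ring]
  field_simp
end

section
/- For |q| < 1, the identity q^{1/12}·c_{yz2,2}(τ) = ∑_{n≥a≥0} (2n+4) q^{n+an+1-a²} = (1 - E₂(q))/6 holds, where E₂(q) = 1 - 24∑_{n≥1}σ₁(n)qⁿ and the sum runs over integer pairs with n ≥ a ≥ 0. -/
noncomputable def sigma1 (n : ℕ) : ℕ := ∑ d ∈ n.divisors, d

noncomputable def E2 (q : ℂ) : ℂ := 1 - 24 * ∑' n : ℕ, (sigma1 (n + 1) : ℂ) * q ^ (n + 1)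

private def e1 : ℕ × ℕ ≃ {p : ℕ × ℕ // p.2 ≤ p.1} where
  toFun x := ⟨(x.1 + x.2, x.1), by simp⟩
  invFun p := (p.1.2, p.1.1 - p.1.2)
  left_inv x := by simp
  right_inv p := by
    obtain ⟨⟨n, a⟩, h⟩ := p
    simp only at h
    apply Subtype.ext
    simp only [Prod.mk.injEq]
    exact ⟨by omega, trivial⟩

private lemma sigma_mk_congr {N M : ℕ} {x y : ℕ × ℕ} (hx : x ∈ (N + 1).divisorsAntidiagonal)
    (hy : y ∈ (M + 1).divisorsAntidiagonal) (hNM : N = M) (hxy : x = y) :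
    (⟨N, ⟨x, hx⟩⟩ : Σ N : ℕ, {x // x ∈ (N + 1).divisorsAntidiagonal}) = ⟨M, ⟨y, hy⟩⟩ := by
  subst hNM; subst hxy; rfl

private def e2 : (Σ N : ℕ, {x // x ∈ (N + 1).divisorsAntidiagonal}) ≃ ℕ × ℕ where
  toFun s := (s.2.1.1 - 1, s.2.1.2 - 1)
  invFun y := ⟨(y.1 + 1) * (y.2 + 1) - 1, ⟨(y.1 + 1, y.2 + 1), by
    rw [Nat.mem_divisorsAntidiagonal]
    have h : 1 ≤ (y.1 + 1) * (y.2 + 1) := Nat.one_le_iff_ne_zero.mpr (by positivity)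
    simp only
    omega⟩⟩
  left_inv s := by
    obtain ⟨N, ⟨⟨u, v⟩, h'⟩⟩ := s
    have h := Nat.mem_divisorsAntidiagonal.mp h'
    simp only at h
    have hu : 1 ≤ u := by rcases Nat.eq_zero_or_pos u with h0 | h0
                          · simp [h0] at h
                          · exact h0
    have hv : 1 ≤ v := by rcases Nat.eq_zero_or_pos v with h0 | h0
                          · simp [h0] at h
                          · exact h0
    refine sigma_mk_congr _ h' ?_ ?_
    · have e1 : u - 1 + 1 = u := by omega
      have e2 : v - 1 + 1 = v := by omega
      rw [e1, e2]
      have := h.1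
      omega
    · have e1 : u - 1 + 1 = u := by omega
      have e2 : v - 1 + 1 = v := by omega
      rw [e1, e2]
  right_inv y := by simp

theorem stmt18 (q : ℂ) (hq : ‖q‖ < 1) :
    ∑' p : {p : ℕ × ℕ // p.2 ≤ p.1},
        ((2 * ((p : ℕ × ℕ).1 : ℂ) + 4) *
          q ^ (((p : ℕ × ℕ).1 : ℤ) + ((p : ℕ × ℕ).2 : ℤ) * ((p : ℕ × ℕ).1 : ℤ) + 1
                - ((p : ℕ × ℕ).2 : ℤ) ^ 2))
      = (1 - E2 q) / 6 := by
  set G : (Σ N : ℕ, {x // x ∈ (N + 1).divisorsAntidiagonal}) → ℂ := fun s =>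
    (2 * ((s.2 : ℕ × ℕ).1 : ℂ) + 2 * ((s.2 : ℕ × ℕ).2 : ℂ)) * q ^ (s.1 + 1) with hGdef
  -- σ₁ bound
  have hσ : ∀ m : ℕ, sigma1 m ≤ m * m := by
    intro m
    calc sigma1 m ≤ m.divisors.card • m := by
          refine Finset.sum_le_card_nsmul _ _ _ ?_
          intro x hx
          exact Nat.divisor_le hx
      _ ≤ m * m := by
          rw [smul_eq_mul]
          rcases Nat.eq_zero_or_pos m with h0 | h0
          · simp [h0, Nat.divisors_zero, sigma1]
          · have : m.divisors.card ≤ m := by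
              have hsub : m.divisors ⊆ Finset.Ico 1 (m + 1) := by
                intro d hd
                have h1 := Nat.divisor_le hd
                have h2 := Nat.pos_of_mem_divisors hd
                simp only [Finset.mem_Ico]
                omega
              calc m.divisors.card ≤ (Finset.Ico 1 (m + 1)).card := Finset.card_le_card hsub
                _ = m := by simp
            exact Nat.mul_le_mul_right m this
  -- fiber sums
  have hfibC : ∀ N : ℕ,
      ∑ x ∈ (N + 1).divisorsAntidiagonal, (2 * x.1 + 2 * x.2) = 4 * sigma1 (N + 1) := by
    intro N
    rw [Finset.sum_add_distrib]
    rw [Nat.sum_divisorsAntidiagonal (fun u v => 2 * u),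
      Nat.sum_divisorsAntidiagonal' (fun u v => 2 * v)]
    unfold sigma1
    rw [← Finset.mul_sum]
    ring
  -- summability of G
  have hGsum : Summable G := by
    apply Summable.of_norm
    rw [summable_sigma_of_nonneg (fun _ => norm_nonneg _)]
    constructor
    · intro N
      exact (hasSum_fintype _).summable
    · have hcalc : ∀ N : ℕ,
          (∑' x : {x // x ∈ (N + 1).divisorsAntidiagonal}, ‖G ⟨N, x⟩‖)
            = ((4 * sigma1 (N + 1) : ℕ) : ℝ) * ‖q‖ ^ (N + 1) := by
        intro N
        rw [tsum_fintype]
        simp only [hGdef]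
        rw [Finset.sum_coe_sort _ (fun x : ℕ × ℕ => ‖(2 * (x.1 : ℂ) + 2 * (x.2 : ℂ)) * q ^ (N + 1)‖)]
        rw [← hfibC N]
        rw [Nat.cast_sum]
        rw [Finset.sum_mul]
        refine Finset.sum_congr rfl fun x hx => ?_
        rw [norm_mul, norm_pow]
        congr 1
        have : (2 * (x.1 : ℂ) + 2 * (x.2 : ℂ)) = ((2 * x.1 + 2 * x.2 : ℕ) : ℂ) := by push_cast; ring
        rw [this, Complex.norm_natCast]
      have hbound : Summable (fun N : ℕ => 4 * ((N + 1 : ℕ) : ℝ) ^ 2 * ‖q‖ ^ (N + 1)) := by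
        have h0 : Summable (fun n : ℕ => (n : ℝ) ^ 2 * ‖q‖ ^ n) :=
          summable_pow_mul_geometric_of_norm_lt_one 2 (by simpa using hq)
        refine ((h0.comp_injective (add_left_injective 1)).mul_left 4).congr fun n => ?_
        simp only [Function.comp]
        push_cast
        ring
      refine Summable.of_nonneg_of_le (fun N => tsum_nonneg fun _ => norm_nonneg _)
        (fun N => ?_) hbound
      rw [hcalc N]
      have h1 : ((4 * sigma1 (N + 1) : ℕ) : ℝ) ≤ 4 * ((N + 1 : ℕ) : ℝ) ^ 2 := by
        have hs : ((sigma1 (N + 1) : ℕ) : ℝ) ≤ ((N + 1 : ℕ) : ℝ) * ((N + 1 : ℕ) : ℝ) := by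
          exact_mod_cast hσ (N + 1)
        push_cast at hs ⊢
        nlinarith [hs]
      have h2 : (0 : ℝ) ≤ ‖q‖ ^ (N + 1) := by positivity
      exact mul_le_mul_of_nonneg_right h1 h2
  -- chain of equalities
  have e := e2.trans e1
  calc ∑' p : {p : ℕ × ℕ // p.2 ≤ p.1},
        ((2 * ((p : ℕ × ℕ).1 : ℂ) + 4) *
          q ^ (((p : ℕ × ℕ).1 : ℤ) + ((p : ℕ × ℕ).2 : ℤ) * ((p : ℕ × ℕ).1 : ℤ) + 1
                - ((p : ℕ × ℕ).2 : ℤ) ^ 2))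
      = ∑' s, G s := by
        rw [← Equiv.tsum_eq (e2.trans e1)]
        refine tsum_congr ?_
        rintro ⟨N, ⟨⟨u, v⟩, h'⟩⟩
        have h := Nat.mem_divisorsAntidiagonal.mp h'
        simp only at h
        have h1 := h.1
        have hu : 1 ≤ u := Nat.one_le_iff_ne_zero.mpr (by rintro rfl; simp at h1)
        have hv : 1 ≤ v := Nat.one_le_iff_ne_zero.mpr (by rintro rfl; simp at h1)
        have hN : (u : ℤ) * v = (N : ℤ) + 1 := by exact_mod_cast h.1
        simp only [Equiv.trans_apply, e1, e2, Equiv.coe_fn_mk, hGdef]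
        have hexp : (((u - 1 + (v - 1) : ℕ) : ℤ) + ((u - 1 : ℕ) : ℤ) * ((u - 1 + (v - 1) : ℕ) : ℤ)
            + 1 - ((u - 1 : ℕ) : ℤ) ^ 2) = ((N + 1 : ℕ) : ℤ) := by
          push_cast [Nat.cast_sub hu, Nat.cast_sub hv]
          linear_combination hN
        rw [hexp, zpow_natCast]
        congr 1
        push_cast [Nat.cast_sub hu, Nat.cast_sub hv]
        ring
    _ = ∑' N : ℕ, ∑' x : {x // x ∈ (N + 1).divisorsAntidiagonal}, G ⟨N, x⟩ := Summable.tsum_sigma hGsum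
    _ = ∑' N : ℕ, ((4 * sigma1 (N + 1) : ℕ) : ℂ) * q ^ (N + 1) := by
        refine tsum_congr fun N => ?_
        rw [tsum_fintype]
        simp only [hGdef]
        rw [Finset.sum_coe_sort _ (fun x : ℕ × ℕ => (2 * (x.1 : ℂ) + 2 * (x.2 : ℂ)) * q ^ (N + 1))]
        rw [← hfibC N, Nat.cast_sum, Finset.sum_mul]
        refine Finset.sum_congr rfl fun x hx => ?_
        push_cast
        ring
    _ = (1 - E2 q) / 6 := by
        rw [E2]
        rw [show (1 - (1 - 24 * ∑' n : ℕ, (sigma1 (n + 1) : ℂ) * q ^ (n + 1))) / 6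
            = 4 * ∑' n : ℕ, (sigma1 (n + 1) : ℂ) * q ^ (n + 1) by ring]
        rw [← tsum_mul_left]
        refine tsum_congr fun N => ?_
        push_cast
        ring
end
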